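/- arXiv:1505.05350 — 5 statements merged into one kernel-verified Lean document; each statement's English description precedes it below -/
import Mathlib

section
/- For every positive integer j ≥ 3, the sum over primes p dividing j of (log p)/p is O(log log j); precisely, there exists a constant C such that for all j ≥ 3, ∑_{p | j} (log p)/p ≤ C · log log j. -/
open Finset

-- Chebyshev: sum of log p over primes ≤ n is ≤ n log 4
lemma theta_le (n : ℕ) :
    ∑ p ∈ Finset.range (n+1) with p.Prime, Real.log p ≤ n * Real.log 4 := by
  have h1 : ∑ p ∈ Finset.range (n+1) with p.Prime, Real.log p
      = Real.log (primorial n) := by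
    rw [primorial, Nat.cast_prod, Real.log_prod]
    intro p hp
    simp only [Finset.mem_filter] at hp
    exact_mod_cast hp.2.pos.ne'
  rw [h1]
  calc Real.log (primorial n) ≤ Real.log ((4:ℕ)^n) := by
        apply Real.log_le_log (by exact_mod_cast primorial_pos n)
        exact_mod_cast primorial_le_4_pow n
    _ = n * Real.log 4 := by
        push_cast
        rw [Real.log_pow]

lemma mertens_le (n : ℕ) :
    ∑ p ∈ Finset.range (n+1) with p.Prime, Real.log p / p ≤ 4 * Real.log n := by
  induction n using Nat.strong_induction_on with
  | _ n ih =>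
  rcases lt_or_ge n 2 with hn | hn
  · interval_cases n
    · simp [Finset.filter_singleton, Nat.not_prime_zero]
    · rw [show Finset.range 2 = {0,1} from rfl]
      norm_num [Finset.filter_insert, Finset.filter_singleton]
  · set m := n / 2 with hm
    have hm1 : 1 ≤ m := Nat.one_le_div_iff (by norm_num) |>.2 hn
    have hmn : m < n := Nat.div_lt_self (by omega) (by norm_num)
    have hsplit : Finset.range (n+1) = Finset.range (m+1) ∪ Finset.Ico (m+1) (n+1) := by
      rw [Finset.range_eq_Ico, Finset.range_eq_Ico]
      exact (Finset.Ico_union_Ico_eq_Ico (a := 0) (b := m+1) (c := n+1) (by omega) (by omega)).symm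
    have hdisj : Disjoint ((Finset.range (m+1)).filter Nat.Prime)
        ((Finset.Ico (m+1) (n+1)).filter Nat.Prime) := by
      apply Finset.disjoint_filter_filter
      rw [Finset.range_eq_Ico]
      exact Finset.Ico_disjoint_Ico_consecutive _ _ _
    rw [hsplit, Finset.filter_union, Finset.sum_union hdisj]
    -- bound the big-prime part
    have hbig : ∑ p ∈ Finset.Ico (m+1) (n+1) with p.Prime, Real.log p / p
        ≤ 2 * Real.log 4 := by
      have h1 : ∑ p ∈ Finset.Ico (m+1) (n+1) with p.Prime, Real.log p / p
          ≤ (∑ p ∈ Finset.Ico (m+1) (n+1) with p.Prime, Real.log p) / (m+1) := by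
        rw [Finset.sum_div]
        apply Finset.sum_le_sum
        intro p hp
        simp only [Finset.mem_filter, Finset.mem_Ico] at hp
        apply div_le_div_of_nonneg_left (Real.log_natCast_nonneg p) (by positivity)
        exact_mod_cast hp.1.1
      have h2 : ∑ p ∈ Finset.Ico (m+1) (n+1) with p.Prime, Real.log p
          ≤ ∑ p ∈ Finset.range (n+1) with p.Prime, Real.log p := by
        apply Finset.sum_le_sum_of_subset_of_nonneg
        · apply Finset.filter_subset_filter
          intro p hp
          simp only [Finset.mem_Ico] at hp
          simp only [Finset.mem_range]
          omega
        · intro p _ _; exact Real.log_natCast_nonneg p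
      have h3 := theta_le n
      have h4 : ((n:ℝ) * Real.log 4) / (m+1) ≤ 2 * Real.log 4 := by
        rw [div_le_iff₀ (by positivity)]
        have : (n:ℝ) ≤ 2 * (m+1) := by
          have : n ≤ 2 * (m+1) := by omega
          exact_mod_cast this
        nlinarith [Real.log_nonneg (by norm_num : (1:ℝ) ≤ 4)]
      calc _ ≤ (∑ p ∈ Finset.Ico (m+1) (n+1) with p.Prime, Real.log p) / (m+1) := h1
        _ ≤ ((n:ℝ) * Real.log 4) / (m+1) := by
            gcongr
            exact h2.trans h3
        _ ≤ 2 * Real.log 4 := h4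
    have hrec := ih m hmn
    have hlog : 4 * Real.log m + 2 * Real.log 4 ≤ 4 * Real.log n := by
      have h4 : Real.log 4 = 2 * Real.log 2 := by
        rw [show (4:ℝ) = 2^2 by norm_num, Real.log_pow]; push_cast; ring
      have h5 : Real.log m + Real.log 2 = Real.log (2*m) := by
        rw [Real.log_mul (by norm_num) (by exact_mod_cast hm1.trans_lt' zero_lt_one |>.ne')]
        ring
      have h6 : Real.log ((2*m : ℕ) : ℝ) ≤ Real.log n := by
        apply Real.log_le_log (by positivity)
        exact_mod_cast Nat.div_mul_le_self n 2 |>.trans_eq' (by rw [hm]; ring)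
      push_cast at h6
      nlinarith
    linarith

theorem sum_log_div_self_primeFactors_bigO :
    ∃ C : ℝ, ∀ j : ℕ, 3 ≤ j →
      ∑ p ∈ j.primeFactors, Real.log p / p ≤ C * Real.log (Real.log j) := by
  have hlog3 : 1 < Real.log 3 := by
    rw [Real.lt_log_iff_exp_lt (by norm_num)]
    calc Real.exp 1 < 2.7182818286 := Real.exp_one_lt_d9
      _ < 3 := by norm_num
  have hll3 : 0 < Real.log (Real.log 3) := Real.log_pos hlog3
  refine ⟨4 + 1 / Real.log (Real.log 3), fun j hj => ?_⟩
  set L := Real.log j with hLdef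
  have hL3 : Real.log 3 ≤ L := Real.log_le_log (by norm_num) (by exact_mod_cast hj)
  have hL1 : 1 < L := hlog3.trans_le hL3
  have hLpos : 0 < L := by linarith
  set y := ⌊L⌋₊ with hy
  have hy1 : 1 ≤ y := Nat.le_floor (by exact_mod_cast hL1.le)
  have hyL : (y:ℝ) ≤ L := Nat.floor_le hLpos.le
  have hLy : L ≤ (y:ℝ) + 1 := (Nat.lt_floor_add_one L).le
  have hllpos : Real.log (Real.log 3) ≤ Real.log L := Real.log_le_log (by linarith) hL3
  -- split the sum
  rw [← Finset.sum_filter_add_sum_filter_not j.primeFactors (fun p => p ≤ y)]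
  have hS1 : ∑ p ∈ j.primeFactors with p ≤ y, Real.log p / p ≤ 4 * Real.log L := by
    calc ∑ p ∈ j.primeFactors with p ≤ y, Real.log p / p
        ≤ ∑ p ∈ Finset.range (y+1) with p.Prime, Real.log p / p := by
          apply Finset.sum_le_sum_of_subset_of_nonneg
          · intro p hp
            simp only [Finset.mem_filter, Finset.mem_range] at hp ⊢
            exact ⟨by omega, Nat.prime_of_mem_primeFactors hp.1⟩
          · intro p _ _
            have := Real.log_natCast_nonneg p
            positivity
      _ ≤ 4 * Real.log y := mertens_le y
      _ ≤ 4 * Real.log L := by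
          have : Real.log (y:ℝ) ≤ Real.log L :=
            Real.log_le_log (by exact_mod_cast hy1) hyL
          linarith
  have hS2 : ∑ p ∈ j.primeFactors with ¬ p ≤ y, Real.log p / p ≤ 1 := by
    have hsum_log : ∑ p ∈ j.primeFactors, Real.log p ≤ L := by
      have h1 : ∑ p ∈ j.primeFactors, Real.log p
          = Real.log ((∏ p ∈ j.primeFactors, p : ℕ) : ℝ) := by
        rw [Nat.cast_prod, Real.log_prod]
        intro p hp
        exact_mod_cast (Nat.prime_of_mem_primeFactors hp).pos.ne'
      rw [h1, hLdef]
      apply Real.log_le_log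
      · exact_mod_cast Finset.prod_pos fun p hp => (Nat.prime_of_mem_primeFactors hp).pos
      · exact_mod_cast Nat.le_of_dvd (by omega) (Nat.prod_primeFactors_dvd j)
    calc ∑ p ∈ j.primeFactors with ¬ p ≤ y, Real.log p / p
        ≤ ∑ p ∈ j.primeFactors with ¬ p ≤ y, Real.log p / ((y:ℝ)+1) := by
          apply Finset.sum_le_sum
          intro p hp
          simp only [Finset.mem_filter, not_le] at hp
          apply div_le_div_of_nonneg_left (Real.log_natCast_nonneg p) (by positivity)
          exact_mod_cast hp.2
      _ = (∑ p ∈ j.primeFactors with ¬ p ≤ y, Real.log p) / ((y:ℝ)+1) := by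
          rw [Finset.sum_div]
      _ ≤ L / ((y:ℝ)+1) := by
          gcongr
          refine (Finset.sum_le_sum_of_subset_of_nonneg (Finset.filter_subset _ _)
            fun p _ _ => Real.log_natCast_nonneg p).trans hsum_log
      _ ≤ 1 := by
          rw [div_le_one (by positivity)]
          exact hLy
  have h1le : (1:ℝ) ≤ (1 / Real.log (Real.log 3)) * Real.log L := by
    rw [div_mul_eq_mul_div, one_mul, le_div_iff₀ hll3]
    linarith
  calc _ ≤ 4 * Real.log L + 1 := by linarith
    _ ≤ (4 + 1 / Real.log (Real.log 3)) * Real.log L := by nlinarith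
end

section
/- For positive integers a₁, a₂, real D > 1, and continuous f : [1,D] → ℝ, the iterated integral ∫₁^D (log x₁)^{a₁-1}/x₁ ∫₁^{D/x₁} (log x₂)^{a₂-1}/x₂ ∫₁^{D/(x₁x₂)} f(x₁x₂x)/x dx dx₂ dx₁ equals ((a₁-1)!(a₂-1)!/(a₁+a₂)!) · ∫₁^D f(x)(log x)^{a₁+a₂}/x dx. -/
open MeasureTheory intervalIntegral Real Finset

lemma hasDerivAt_H {g : ℝ → ℝ} (hg : Continuous g) (L : ℝ) (j : ℕ) (t : ℝ) :
    HasDerivAt (fun u => ∫ v in u..L, g v * v ^ j) (-(g t * t ^ j)) t := by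
  have hc : Continuous fun v : ℝ => g v * v ^ j := hg.mul (continuous_pow j)
  exact intervalIntegral.integral_hasDerivAt_left (hc.intervalIntegrable _ _)
    hc.stronglyMeasurable.stronglyMeasurableAtFilter hc.continuousAt

lemma contH {g : ℝ → ℝ} (hg : Continuous g) (L : ℝ) (j : ℕ) :
    Continuous (fun u => ∫ v in u..L, g v * v ^ j) :=
  continuous_iff_continuousAt.2 fun t => (hasDerivAt_H hg L j t).continuousAt

lemma expand {g : ℝ → ℝ} (hg : Continuous g) (b : ℕ) (L t : ℝ) :
    (∫ v in t..L, g v * (v - t) ^ b) =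
      ∑ k ∈ Finset.range (b+1), ((b.choose k : ℝ) * (-t) ^ (b-k)) *
        ∫ v in t..L, g v * v ^ k := by
  have h1 : (∫ v in t..L, g v * (v - t) ^ b) =
      ∫ v in t..L, ∑ k ∈ Finset.range (b+1),
        ((b.choose k : ℝ) * (-t) ^ (b-k)) * (g v * v ^ k) := by
    apply intervalIntegral.integral_congr
    intro v _
    show g v * (v - t) ^ b = _
    rw [show v - t = v + (-t) by ring, add_pow, Finset.mul_sum]
    exact Finset.sum_congr rfl fun k _ => by ring
  rw [h1, intervalIntegral.integral_finset_sum]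
  · exact Finset.sum_congr rfl fun k _ => intervalIntegral.integral_const_mul _ _
  · intro k _
    exact (continuous_const.mul (hg.mul (continuous_pow k))).intervalIntegrable _ _

lemma contG {g : ℝ → ℝ} (hg : Continuous g) (L : ℝ) (b : ℕ) :
    Continuous (fun u => ∫ v in u..L, g v * (v - u) ^ b) := by
  rw [show (fun u => ∫ v in u..L, g v * (v - u) ^ b) =
      fun u => ∑ k ∈ Finset.range (b+1), ((b.choose k : ℝ) * (-u) ^ (b-k)) *
        ∫ v in u..L, g v * v ^ k from funext fun u => expand hg b L u]
  exact continuous_finset_sum _ fun k _ =>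
    (continuous_const.mul (continuous_neg.pow _)).mul (contH hg L k)

lemma hasDerivAt_G {g : ℝ → ℝ} (hg : Continuous g) (L : ℝ) (b : ℕ) (t : ℝ) :
    HasDerivAt (fun u => ∫ v in u..L, g v * (v - u) ^ (b+1))
      (-((b:ℝ)+1) * ∫ v in t..L, g v * (v - t) ^ b) t := by
  rw [show (fun u => ∫ v in u..L, g v * (v - u) ^ (b+1)) =
      fun u => ∑ k ∈ Finset.range (b+2), (((b+1).choose k : ℝ) * (-u) ^ (b+1-k)) *
        ∫ v in u..L, g v * v ^ k from funext fun u => expand hg (b+1) L u]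
  have hd : ∀ k ∈ Finset.range (b+2), HasDerivAt
      (fun u => ((((b+1).choose k : ℝ)) * (-u) ^ (b+1-k)) * ∫ v in u..L, g v * v ^ k)
      (((((b+1).choose k : ℝ)) * (((b+1-k : ℕ):ℝ) * (-t)^(b+1-k-1) * (-1))) *
          (∫ v in t..L, g v * v ^ k)
        + ((((b+1).choose k : ℝ)) * (-t) ^ (b+1-k)) * (-(g t * t ^ k))) t := by
    intro k _
    exact (((hasDerivAt_neg t).pow _).const_mul _).mul (hasDerivAt_H hg L k t)
  refine (HasDerivAt.fun_sum hd).congr_deriv (Eq.symm ?_)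
  rw [expand hg b L t, Finset.mul_sum, Finset.sum_add_distrib]
  have hB : ∑ k ∈ Finset.range (b+2),
      ((((b+1).choose k : ℝ)) * (-t) ^ (b+1-k)) * (-(g t * t ^ k)) = 0 := by
    have h1 : ∑ k ∈ Finset.range (b+2),
        ((((b+1).choose k : ℝ)) * (-t) ^ (b+1-k)) * (-(g t * t ^ k))
        = -(g t * ∑ k ∈ Finset.range (b+2), t^k * (-t)^(b+1-k) * ((b+1).choose k : ℝ)) := by
      rw [Finset.mul_sum, ← Finset.sum_neg_distrib]
      exact Finset.sum_congr rfl fun k _ => by ring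
    rw [h1, ← add_pow]
    simp
  rw [hB, add_zero]
  conv_rhs => rw [Finset.sum_range_succ]
  have hlast : ((((b+1).choose (b+1) : ℝ)) * (((b+1-(b+1) : ℕ):ℝ) * (-t)^(b+1-(b+1)-1) * (-1))) *
      (∫ v in t..L, g v * v ^ (b+1)) = 0 := by simp
  rw [hlast, add_zero]
  refine Finset.sum_congr rfl fun k hk => ?_
  have hk' : k ≤ b := Nat.lt_succ_iff.mp (Finset.mem_range.mp hk)
  have hbk : b+1-k-1 = b-k := by omega
  have hcast : (((b+1).choose k : ℕ) : ℝ) * ((b+1-k : ℕ):ℝ) = ((b:ℝ)+1) * ((b.choose k : ℕ):ℝ) := by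
    have h := congrArg (Nat.cast : ℕ → ℝ) (Nat.choose_mul_succ_eq b k)
    push_cast at h
    linarith
  rw [hbk]
  linear_combination ((-t)^(b-k) * (∫ v in t..L, g v * v ^ k)) * hcast

lemma parts {U U' : ℝ → ℝ} (hU : ∀ t, HasDerivAt U (U' t) t) (hU'c : Continuous U')
    (a : ℕ) (L : ℝ) (hUL : U L = 0) :
    (∫ t in (0:ℝ)..L, t ^ a * U t) = -(1/((a:ℝ)+1)) * ∫ t in (0:ℝ)..L, U' t * t ^ (a+1) := by
  have ha : ((a:ℝ)+1) ≠ 0 := by positivity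
  have hv : ∀ t : ℝ, HasDerivAt (fun x => x ^ (a+1) / ((a:ℝ)+1)) (t ^ a) t := by
    intro t
    have := (hasDerivAt_pow (a+1) t).div_const ((a:ℝ)+1)
    refine this.congr_deriv (Eq.symm ?_)
    field_simp
    rw [Nat.add_sub_cancel]; push_cast; ring
  have hUc : Continuous U := continuous_iff_continuousAt.2 fun t => (hU t).continuousAt
  have h := intervalIntegral.integral_mul_deriv_eq_deriv_mul (a := (0:ℝ)) (b := L)
    (u := U) (u' := U') (v := fun x => x ^ (a+1) / ((a:ℝ)+1)) (v' := fun x => x ^ a)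
    (fun x _ => hU x) (fun x _ => hv x)
    (hU'c.intervalIntegrable _ _) ((continuous_pow a).intervalIntegrable _ _)
  have h1 : (∫ t in (0:ℝ)..L, t ^ a * U t) = ∫ t in (0:ℝ)..L, U t * t ^ a := by
    apply intervalIntegral.integral_congr; intro t _; ring
  rw [h1, h, hUL]
  have h2 : (∫ t in (0:ℝ)..L, U' t * (t ^ (a+1) / ((a:ℝ)+1))) =
      (1/((a:ℝ)+1)) * ∫ t in (0:ℝ)..L, U' t * t ^ (a+1) := by
    rw [← intervalIntegral.integral_const_mul]
    apply intervalIntegral.integral_congr; intro t _; field_simp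
  rw [h2]
  simp

lemma key3 {g : ℝ → ℝ} (hg : Continuous g) : ∀ (b a : ℕ) (L : ℝ),
    (∫ t in (0:ℝ)..L, t ^ a * ∫ v in t..L, g v * (v - t) ^ b) =
      ((a.factorial * b.factorial : ℝ) / ((a+b+1).factorial : ℝ)) *
        ∫ v in (0:ℝ)..L, g v * v ^ (a+b+1) := by
  intro b
  induction b with
  | zero =>
    intro a L
    have h0 : (∫ t in (0:ℝ)..L, t ^ a * ∫ v in t..L, g v * (v - t) ^ 0) =
        ∫ t in (0:ℝ)..L, t ^ a * ∫ v in t..L, g v * v ^ 0 := by simp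
    rw [h0, parts (hasDerivAt_H hg L 0) (by continuity) a L (by simp)]
    have h1 : (∫ t in (0:ℝ)..L, (-(g t * t ^ 0)) * t ^ (a+1)) =
        -∫ t in (0:ℝ)..L, g t * t ^ (a+1) := by
      rw [← intervalIntegral.integral_neg]
      apply intervalIntegral.integral_congr; intro t _; ring
    rw [h1]
    have h2 : ((a+0+1).factorial : ℝ) = ((a:ℝ)+1) * (a.factorial : ℝ) := by
      rw [show a+0+1 = a+1 by ring, Nat.factorial_succ]; push_cast; ring
    rw [show a+0+1 = a+1 by ring]
    rw [h2]
    have ha : ((a:ℝ)+1) ≠ 0 := by positivity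
    have hfa : (a.factorial : ℝ) ≠ 0 := by positivity
    field_simp
    ring
  | succ b ih =>
    intro a L
    rw [parts (hasDerivAt_G hg L b) (continuous_const.mul (contG hg L b)) a L
      (by simp [intervalIntegral.integral_same])]
    have h1 : (∫ t in (0:ℝ)..L, (-((b:ℝ)+1) * ∫ v in t..L, g v * (v - t) ^ b) * t ^ (a+1)) =
        -((b:ℝ)+1) * ∫ t in (0:ℝ)..L, t ^ (a+1) * ∫ v in t..L, g v * (v - t) ^ b := by
      rw [← intervalIntegral.integral_const_mul]
      apply intervalIntegral.integral_congr; intro t _; ring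
    rw [h1, ih (a+1) L]
    have he : a + 1 + b + 1 = a + (b+1) + 1 := by ring
    rw [he]
    have ha : ((a:ℝ)+1) ≠ 0 := by positivity
    have hb : ((b:ℝ)+1) ≠ 0 := by positivity
    have hfs : ((a + (b+1) + 1).factorial : ℝ) ≠ 0 := by positivity
    have hfa : ((a+1).factorial : ℝ) = ((a:ℝ)+1) * a.factorial := by
      rw [Nat.factorial_succ]; push_cast; ring
    have hfb : ((b+1).factorial : ℝ) = ((b:ℝ)+1) * b.factorial := by
      rw [Nat.factorial_succ]; push_cast; ring
    rw [hfa, hfb]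
    field_simp

lemma subst_exp {h : ℝ → ℝ} (hh : ContinuousOn h (Set.Ioi 0)) (a b : ℝ) :
    (∫ t in a..b, Real.exp t * h (Real.exp t)) = ∫ x in Real.exp a..Real.exp b, h x := by
  have himg : Real.exp '' Set.uIcc a b ⊆ Set.Ioi 0 := by
    rintro x ⟨t, -, rfl⟩
    exact Real.exp_pos t
  have := intervalIntegral.integral_comp_smul_deriv' (f := Real.exp) (f' := Real.exp)
    (g := h) (fun x _ => Real.hasDerivAt_exp x) Real.continuous_exp.continuousOn
    (hh.mono himg)
  simpa [smul_eq_mul, Function.comp] using this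

lemma shift_integral (g : ℝ → ℝ) (s L : ℝ) :
    (∫ t in (0:ℝ)..(L - s), g (s + t)) = ∫ w in s..L, g w := by
  rw [intervalIntegral.integral_comp_add_left g s, add_zero, show s + (L - s) = L by ring]

theorem iterated_log_integral_two (a₁ a₂ : ℕ) (ha₁ : 0 < a₁) (ha₂ : 0 < a₂)
    (D : ℝ) (hD : 1 < D) (f : ℝ → ℝ) (hf : ContinuousOn f (Set.Icc 1 D)) :
    (∫ x₁ in (1:ℝ)..D, (Real.log x₁) ^ (a₁ - 1) / x₁ *
        ∫ x₂ in (1:ℝ)..(D / x₁), (Real.log x₂) ^ (a₂ - 1) / x₂ *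
          ∫ x in (1:ℝ)..(D / (x₁ * x₂)), f (x₁ * x₂ * x) / x) =
      ((Nat.factorial (a₁ - 1) * Nat.factorial (a₂ - 1) : ℝ) /
          (Nat.factorial (a₁ + a₂) : ℝ)) *
        ∫ x in (1:ℝ)..D, f x * (Real.log x) ^ (a₁ + a₂) / x := by
  have hD1 : (1:ℝ) ≤ D := hD.le
  have hDpos : (0:ℝ) < D := lt_trans one_pos hD
  set F : ℝ → ℝ := fun x => (Set.Icc (1:ℝ) D).restrict f (Set.projIcc 1 D hD1 x) with hFdef
  have hF : Continuous F := hf.restrict.comp continuous_projIcc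
  have hFeq : ∀ x ∈ Set.Icc (1:ℝ) D, F x = f x := by
    intro x hx
    simp only [hFdef, Set.restrict_apply, Set.projIcc_of_mem hD1 hx]
    rfl
  set g : ℝ → ℝ := fun t => F (Real.exp t) with hgdef
  have hgc : Continuous g := hF.comp Real.continuous_exp
  set L : ℝ := Real.log D with hLdef
  have hexpL : Real.exp L = D := Real.exp_log hDpos
  -- innermost identity
  have hinner : ∀ s : ℝ, (∫ x in (1:ℝ)..(D / Real.exp s), F (Real.exp s * x) / x)
      = ∫ w in s..L, g w := by
    intro s
    have hcont : ContinuousOn (fun x => F (Real.exp s * x) / x) (Set.Ioi 0) :=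
      ((hF.comp (continuous_const.mul continuous_id)).continuousOn).div
        continuousOn_id (fun x hx => ne_of_gt hx)
    have h1 := subst_exp hcont 0 (L - s)
    rw [Real.exp_zero, Real.exp_sub, hexpL] at h1
    rw [← h1, intervalIntegral.integral_congr (g := fun t => g (s + t))
      (fun t _ => by
        show Real.exp t * (F (Real.exp s * Real.exp t) / Real.exp t) = g (s + t)
        rw [mul_comm, div_mul_cancel₀ _ (Real.exp_ne_zero t), hgdef, ← Real.exp_add]),
      shift_integral]
  have hcontH0 : Continuous (fun u : ℝ => ∫ w in u..L, g w) := by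
    have := contH hgc L 0
    simpa using this
  -- middle identity
  have hmid : ∀ y : ℝ, 0 < y →
      (∫ x₂ in (1:ℝ)..(D / y), (Real.log x₂) ^ (a₂ - 1) / x₂ *
          ∫ x in (1:ℝ)..(D / (y * x₂)), F (y * x₂ * x) / x)
      = (((a₂-1).factorial : ℝ) / (a₂.factorial : ℝ)) *
          ∫ w in (Real.log y)..L, g w * (w - Real.log y) ^ a₂ := by
    intro y hy
    have hstep1 : (∫ x₂ in (1:ℝ)..(D / y), (Real.log x₂) ^ (a₂ - 1) / x₂ *
          ∫ x in (1:ℝ)..(D / (y * x₂)), F (y * x₂ * x) / x)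
        = ∫ x₂ in (1:ℝ)..(D / y), (Real.log x₂) ^ (a₂ - 1) / x₂ *
            ∫ w in (Real.log y + Real.log x₂)..L, g w := by
      apply intervalIntegral.integral_congr
      intro x₂ hx₂
      have hx₂pos : 0 < x₂ := by
        rcases Set.mem_uIcc.mp hx₂ with h | h
        · linarith [h.1]
        · have : 0 < D / y := div_pos hDpos hy
          linarith [h.1]
      have he : Real.exp (Real.log y + Real.log x₂) = y * x₂ := by
        rw [Real.exp_add, Real.exp_log hy, Real.exp_log hx₂pos]
      have h2 := hinner (Real.log y + Real.log x₂)
      rw [he] at h2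
      show (Real.log x₂) ^ (a₂ - 1) / x₂ * _ = _
      rw [h2]
    rw [hstep1]
    have hΦc : Continuous (fun u : ℝ => ∫ w in (Real.log y + u)..L, g w) :=
      hcontH0.comp (continuous_const.add continuous_id)
    have hcont2 : ContinuousOn
        (fun x => (Real.log x) ^ (a₂ - 1) / x *
          ∫ w in (Real.log y + Real.log x)..L, g w) (Set.Ioi 0) := by
      apply ContinuousOn.mul
      · exact ((Real.continuousOn_log.mono (fun x hx => ne_of_gt hx)).pow _).div
          continuousOn_id (fun x hx => ne_of_gt hx)
      · exact hΦc.comp_continuousOn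
          (Real.continuousOn_log.mono (fun x hx => ne_of_gt hx))
    have h3 := subst_exp hcont2 0 (Real.log (D / y))
    rw [Real.exp_zero, Real.exp_log (div_pos hDpos hy),
      Real.log_div (ne_of_gt hDpos) (ne_of_gt hy)] at h3
    rw [← h3, intervalIntegral.integral_congr
      (g := fun t => t ^ (a₂ - 1) * ∫ u in t..(L - Real.log y), g (Real.log y + u))
      (fun t _ => by
        show Real.exp t * ((Real.log (Real.exp t)) ^ (a₂ - 1) / Real.exp t *
          ∫ w in (Real.log y + Real.log (Real.exp t))..L, g w) =
          t ^ (a₂ - 1) * ∫ u in t..(L - Real.log y), g (Real.log y + u)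
        rw [Real.log_exp,
          show (∫ w in (Real.log y + t)..L, g w) =
              ∫ u in t..(L - Real.log y), g (Real.log y + u) from by
            rw [intervalIntegral.integral_comp_add_left g (Real.log y),
              show Real.log y + (L - Real.log y) = L by ring]]
        field_simp)]
    have hk := key3 (g := fun u => g (Real.log y + u))
      (hgc.comp (continuous_const.add continuous_id)) 0 (a₂ - 1) (L - Real.log y)
    simp only [pow_zero, mul_one] at hk
    rw [hk]
    have ha2 : a₂ - 1 + 0 + 1 = a₂ := by omega
    rw [ha2]
    have hconv : (∫ v in (0:ℝ)..(L - Real.log y), g (Real.log y + v) * v ^ a₂)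
        = ∫ w in (Real.log y)..L, g w * (w - Real.log y) ^ a₂ := by
      rw [← shift_integral (fun w => g w * (w - Real.log y) ^ a₂) (Real.log y) L]
      apply intervalIntegral.integral_congr
      intro v _
      show g (Real.log y + v) * v ^ a₂ = g (Real.log y + v) * (Real.log y + v - Real.log y) ^ a₂
      rw [add_sub_cancel_left]
    rw [hconv]
    simp [Nat.factorial_zero]
  -- replace f by F in LHS
  have hLHS1 : (∫ x₁ in (1:ℝ)..D, (Real.log x₁) ^ (a₁ - 1) / x₁ *
        ∫ x₂ in (1:ℝ)..(D / x₁), (Real.log x₂) ^ (a₂ - 1) / x₂ *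
          ∫ x in (1:ℝ)..(D / (x₁ * x₂)), f (x₁ * x₂ * x) / x)
      = ∫ x₁ in (1:ℝ)..D, (Real.log x₁) ^ (a₁ - 1) / x₁ *
        ∫ x₂ in (1:ℝ)..(D / x₁), (Real.log x₂) ^ (a₂ - 1) / x₂ *
          ∫ x in (1:ℝ)..(D / (x₁ * x₂)), F (x₁ * x₂ * x) / x := by
    apply intervalIntegral.integral_congr
    intro x₁ hx₁
    rw [Set.uIcc_of_le hD1] at hx₁
    obtain ⟨hx₁1, hx₁D⟩ := hx₁
    have hx₁pos : 0 < x₁ := lt_of_lt_of_le one_pos hx₁1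
    show _ * _ = _ * _
    congr 1
    apply intervalIntegral.integral_congr
    intro x₂ hx₂
    have hd1 : (1:ℝ) ≤ D / x₁ := (one_le_div hx₁pos).2 hx₁D
    rw [Set.uIcc_of_le hd1] at hx₂
    obtain ⟨hx₂1, hx₂D⟩ := hx₂
    have hx₂pos : 0 < x₂ := lt_of_lt_of_le one_pos hx₂1
    have hprod : x₁ * x₂ ≤ D := by
      have h2 := (le_div_iff₀ hx₁pos).mp hx₂D
      nlinarith
    have hd2 : (1:ℝ) ≤ D / (x₁ * x₂) := (one_le_div (by positivity)).2 hprod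
    show _ * _ = _ * _
    congr 1
    apply intervalIntegral.integral_congr
    intro x hx
    rw [Set.uIcc_of_le hd2] at hx
    obtain ⟨hxl, hxr⟩ := hx
    show f (x₁ * x₂ * x) / x = F (x₁ * x₂ * x) / x
    congr 1
    refine (hFeq _ ⟨?_, ?_⟩).symm
    · have hab : (1:ℝ) ≤ x₁ * x₂ := by nlinarith
      nlinarith
    · have h3 := (le_div_iff₀ (show (0:ℝ) < x₁ * x₂ by positivity)).mp hxr
      nlinarith
  rw [hLHS1]
  have hLHS2 : (∫ x₁ in (1:ℝ)..D, (Real.log x₁) ^ (a₁ - 1) / x₁ *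
        ∫ x₂ in (1:ℝ)..(D / x₁), (Real.log x₂) ^ (a₂ - 1) / x₂ *
          ∫ x in (1:ℝ)..(D / (x₁ * x₂)), F (x₁ * x₂ * x) / x)
      = ∫ x₁ in (1:ℝ)..D, (Real.log x₁) ^ (a₁ - 1) / x₁ *
          ((((a₂-1).factorial : ℝ) / (a₂.factorial : ℝ)) *
            ∫ w in (Real.log x₁)..L, g w * (w - Real.log x₁) ^ a₂) := by
    apply intervalIntegral.integral_congr
    intro x₁ hx₁
    have hx₁pos : 0 < x₁ := by
      rcases Set.mem_uIcc.mp hx₁ with h | h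
      · linarith [h.1]
      · linarith [h.1, hDpos]
    show _ * _ = _ * _
    rw [hmid x₁ hx₁pos]
  rw [hLHS2]
  have hlogIoi : ContinuousOn Real.log (Set.Ioi 0) :=
    Real.continuousOn_log.mono (fun x hx => ne_of_gt hx)
  have hcont3 : ContinuousOn (fun x => (Real.log x) ^ (a₁ - 1) / x *
      ((((a₂-1).factorial : ℝ) / (a₂.factorial : ℝ)) *
        ∫ w in (Real.log x)..L, g w * (w - Real.log x) ^ a₂)) (Set.Ioi 0) := by
    apply ContinuousOn.mul
    · exact ((hlogIoi.pow _).div continuousOn_id (fun x hx => ne_of_gt hx))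
    · exact continuousOn_const.mul ((contG hgc L a₂).comp_continuousOn hlogIoi)
  have h4 := subst_exp hcont3 0 L
  rw [Real.exp_zero, hexpL] at h4
  rw [← h4]
  rw [intervalIntegral.integral_congr
    (g := fun t => (((a₂-1).factorial : ℝ) / (a₂.factorial : ℝ)) *
      (t ^ (a₁ - 1) * ∫ w in t..L, g w * (w - t) ^ a₂))
    (fun t _ => by
      show Real.exp t * ((Real.log (Real.exp t)) ^ (a₁ - 1) / Real.exp t *
          ((((a₂-1).factorial : ℝ) / (a₂.factorial : ℝ)) *
            ∫ w in (Real.log (Real.exp t))..L, g w * (w - Real.log (Real.exp t)) ^ a₂)) = _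
      rw [Real.log_exp]
      field_simp)]
  rw [intervalIntegral.integral_const_mul, key3 hgc a₂ (a₁ - 1) L]
  have he : a₁ - 1 + a₂ + 1 = a₁ + a₂ := by omega
  rw [he]
  have hRHS : (∫ x in (1:ℝ)..D, f x * (Real.log x) ^ (a₁ + a₂) / x)
      = ∫ t in (0:ℝ)..L, g t * t ^ (a₁ + a₂) := by
    have hstep : (∫ x in (1:ℝ)..D, f x * (Real.log x) ^ (a₁ + a₂) / x)
        = ∫ x in (1:ℝ)..D, F x * (Real.log x) ^ (a₁ + a₂) / x := by
      apply intervalIntegral.integral_congr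
      intro x hx
      rw [Set.uIcc_of_le hD1] at hx
      show f x * (Real.log x) ^ (a₁ + a₂) / x = F x * (Real.log x) ^ (a₁ + a₂) / x
      rw [hFeq x hx]
    have hcf : ContinuousOn (fun x => F x * (Real.log x) ^ (a₁ + a₂) / x) (Set.Ioi 0) :=
      (hF.continuousOn.mul (hlogIoi.pow _)).div continuousOn_id (fun x hx => ne_of_gt hx)
    have h5 := subst_exp hcf 0 L
    rw [Real.exp_zero, hexpL] at h5
    rw [hstep, ← h5]
    apply intervalIntegral.integral_congr
    intro t _
    show Real.exp t * (F (Real.exp t) * (Real.log (Real.exp t)) ^ (a₁ + a₂) / Real.exp t)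
        = g t * t ^ (a₁ + a₂)
    rw [Real.log_exp]
    field_simp
    simp only [hgdef]
    ring
  rw [hRHS, ← mul_assoc]
  congr 1
  have hfa2 : (a₂.factorial : ℝ) = (a₂ : ℝ) * ((a₂-1).factorial : ℝ) := by
    have h := congrArg (Nat.cast : ℕ → ℝ) (Nat.mul_factorial_pred ha₂.ne')
    push_cast at h
    linarith
  have h1 : ((a₂-1).factorial : ℝ) ≠ 0 := by positivity
  have h2 : ((a₁+a₂).factorial : ℝ) ≠ 0 := by positivity
  have h3 : (a₂.factorial : ℝ) ≠ 0 := by positivity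
  field_simp
end

section
/- For any positive integer m, positive integers a₁,…,a_m, real D > 1, and continuous f : [1,D] → ℝ, the m+1-fold iterated integral ∫₁^D (log x₁)^{a₁-1}/x₁ ⋯ ∫₁^{D/(x₁⋯x_{m-1})} (log x_m)^{a_m-1}/x_m ∫₁^{D/(x₁⋯x_m)} f(x₁⋯x_m·x)/x dx dx_m ⋯ dx₁ equals (∏_{i=1}^m (a_i−1)!) / (∑_{i=1}^m a_i)! · ∫₁^D f(x)(log x)^{∑ a_i}/x dx. -/
open intervalIntegral in
/-- The iterated integral
`∫₁^{D/t} (log x₁)^{a₁-1}/x₁ ⋯ ∫₁^{D/(t·x₁⋯x_m)} f(t·x₁⋯x_m·x)/x dx ⋯ dx₁`,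
defined by recursion on the list of exponents, where `t` is the accumulated
product of the previously chosen variables. -/
noncomputable def iterLogIntegral (D : ℝ) (f : ℝ → ℝ) : List ℕ → ℝ → ℝ
  | [], t => ∫ x in (1:ℝ)..(D / t), f (t * x) / x
  | a :: as, t =>
      ∫ x in (1:ℝ)..(D / t), (Real.log x) ^ (a - 1) / x * iterLogIntegral D f as (t * x)


open Finset in
lemma beta_sum : ∀ (k n : ℕ),
    (∑ i ∈ range (k+1), (-1:ℝ)^i * (k.choose i) / ((n:ℝ)+i+1))
      = (k.factorial * n.factorial / (n+k+1).factorial : ℝ) := by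
  intro k
  induction k with
  | zero =>
    intro n
    have h2 : ((n.factorial : ℝ)) ≠ 0 := by positivity
    simp only [range_one, sum_singleton, pow_zero, Nat.choose_self, Nat.cast_one,
      Nat.factorial_zero, Nat.factorial_succ, Nat.cast_mul]
    push_cast
    field_simp
    rw [Finset.sum_range_one]
    simp
    exact inv_mul_cancel₀ (by positivity : ((n:ℝ)+1) ≠ 0)
  | succ k ih =>
    intro n
    have hsplit : (∑ i ∈ range (k+1+1), (-1:ℝ)^i * ((k+1).choose i) / ((n:ℝ)+i+1))
        = (∑ i ∈ range (k+1), (-1:ℝ)^i * (k.choose i) / ((n:ℝ)+i+1))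
          - (∑ i ∈ range (k+1), (-1:ℝ)^i * (k.choose i) / (((n+1:ℕ):ℝ)+i+1)) := by
      rw [Finset.sum_range_succ' (fun i => (-1:ℝ)^i * ((k+1).choose i) / ((n:ℝ)+i+1)) (k+1)]
      push_cast
      have expand : ∀ i ∈ range (k+1),
          (-1:ℝ)^(i+1) * (((k+1).choose (i+1) : ℕ) : ℝ) / ((n:ℝ)+((i:ℝ)+1)+1)
          = (-1:ℝ)^(i+1) * (k.choose (i+1)) / ((n:ℝ)+((i:ℝ)+1)+1)
            + (-((-1:ℝ)^i * (k.choose i) / ((n:ℝ)+1+(i:ℝ)+1))) := by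
        intro i _
        rw [Nat.choose_succ_succ]
        push_cast
        have h : ((n:ℝ)+((i:ℝ)+1)+1) = ((n:ℝ)+1+(i:ℝ)+1) := by ring
        rw [h]
        ring
      rw [Finset.sum_congr rfl expand, Finset.sum_add_distrib, Finset.sum_neg_distrib]
      have h2 : (∑ i ∈ range (k+1+1), (-1:ℝ)^i * (k.choose i) / ((n:ℝ)+i+1))
          = (∑ i ∈ range (k+1), (-1:ℝ)^(i+1) * (k.choose (i+1)) / ((n:ℝ)+((i:ℝ)+1)+1))
            + 1 * 1 / ((n:ℝ) + 0 + 1) := by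
        rw [Finset.sum_range_succ' (fun i => (-1:ℝ)^i * (k.choose i) / ((n:ℝ)+i+1)) (k+1)]
        push_cast
        norm_num
      have h3 : (∑ i ∈ range (k+1+1), (-1:ℝ)^i * (k.choose i) / ((n:ℝ)+i+1))
          = (∑ i ∈ range (k+1), (-1:ℝ)^i * (k.choose i) / ((n:ℝ)+i+1)) := by
        rw [Finset.sum_range_succ]
        simp [Nat.choose_succ_self]
      simp only [Nat.choose_zero_right, Nat.cast_one, pow_zero] at h2 ⊢
      linarith
    rw [hsplit, ih n, ih (n+1)]
    have hidx : (n+1)+(k+1) = n+k+2 := by omega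
    have hidx2 : n + (k+1) + 1 = n+k+2 := by omega
    rw [hidx2]
    have e1 : (((n+k+2).factorial : ℕ) : ℝ) = ((n+k+2 : ℕ) : ℝ) * ((n+k+1).factorial : ℝ) := by
      rw [show n+k+2 = (n+k+1)+1 from rfl, Nat.factorial_succ]; push_cast; ring
    have e2 : (((n+1).factorial : ℕ) : ℝ) = ((n+1 : ℕ) : ℝ) * (n.factorial : ℝ) := by
      rw [Nat.factorial_succ]; push_cast; ring
    have e3 : (((k+1).factorial : ℕ) : ℝ) = ((k+1 : ℕ) : ℝ) * (k.factorial : ℝ) := by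
      rw [Nat.factorial_succ]; push_cast; ring
    rw [show (n+1)+k+1 = n+k+2 from by omega, e1, e2, e3]
    have p1 : ((n+k+1).factorial : ℝ) ≠ 0 := by positivity
    have p2 : (n.factorial : ℝ) ≠ 0 := by positivity
    have p3 : (k.factorial : ℝ) ≠ 0 := by positivity
    have p4 : ((n:ℝ)+(k:ℝ)+2) ≠ 0 := by positivity
    push_cast
    field_simp
    ring

open intervalIntegral in
/-- FTC: derivative in the lower limit. -/
lemma hasDerivAt_lower {h : ℝ → ℝ} (hh : Continuous h) (M w : ℝ) :
    HasDerivAt (fun u => ∫ z in u..M, h z) (-(h w)) w :=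
  intervalIntegral.integral_hasDerivAt_left (hh.intervalIntegrable _ _)
    (hh.stronglyMeasurableAtFilter _ _) hh.continuousAt

open intervalIntegral in
/-- Integration by parts step: `∫ w in 0..M, w^p * (∫ z in w..M, h z * z^j dz) dw
  = (1/(p+1)) * ∫ z in 0..M, h z * z^(p+1+j) dz`. -/
lemma ibp_step {h : ℝ → ℝ} (hh : Continuous h) (p j : ℕ) (M : ℝ) :
    (∫ w in (0:ℝ)..M, w^p * (∫ z in w..M, h z * z^j))
      = (1/((p:ℝ)+1)) * ∫ z in (0:ℝ)..M, h z * z^(p+1+j) := by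
  have hcont : Continuous (fun z => h z * z^j) := hh.mul (continuous_pow j)
  set F : ℝ → ℝ := fun w => ∫ z in w..M, h z * z^j with hF
  have hFd : ∀ w : ℝ, HasDerivAt F (-(h w * w^j)) w := fun w => hasDerivAt_lower hcont M w
  have hFc : Continuous F := by
    rw [continuous_iff_continuousAt]; exact fun w => (hFd w).continuousAt
  have hud : ∀ w : ℝ, HasDerivAt (fun w : ℝ => w^(p+1) / ((p:ℝ)+1)) ((w:ℝ)^p) w := by
    intro w
    have := (hasDerivAt_pow (p+1) w).div_const ((p:ℝ)+1)
    have hne : ((p:ℝ)+1) ≠ 0 := by positivity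
    refine this.congr_deriv ?_
    push_cast
    field_simp
  have ibp := intervalIntegral.integral_mul_deriv_eq_deriv_mul (a := (0:ℝ)) (b := M)
    (u := fun w => w^(p+1) / ((p:ℝ)+1)) (v := F)
    (u' := fun w => (w:ℝ)^p) (v' := fun w => -(h w * w^j))
    (fun x _ => hud x) (fun x _ => hFd x)
    ((continuous_pow p).intervalIntegrable _ _)
    ((hcont.neg).intervalIntegrable _ _)
  -- ibp : ∫ u * v' = u M * F M - u 0 * F 0 - ∫ u' * F
  have hFM : F M = 0 := intervalIntegral.integral_same
  simp only [hFM, mul_zero, zero_pow (Nat.succ_ne_zero p), zero_div, zero_mul, zero_sub] at ibp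
  have lhs_eq : (∫ w in (0:ℝ)..M, w^p * F w) = - ∫ w in (0:ℝ)..M, (w^(p+1)/((p:ℝ)+1)) * (-(h w * w^j)) := by
    rw [ibp]; ring
  rw [lhs_eq]
  have : (∫ w in (0:ℝ)..M, (w^(p+1)/((p:ℝ)+1)) * (-(h w * w^j)))
      = (-(1/((p:ℝ)+1))) * ∫ w in (0:ℝ)..M, h w * w^(p+1+j) := by
    rw [← intervalIntegral.integral_const_mul]
    refine intervalIntegral.integral_congr fun w _ => ?_
    rw [pow_add]
    ring
  rw [this]
  ring

open Finset intervalIntegral in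
lemma core_integral {h : ℝ → ℝ} (hh : Continuous h) (n k : ℕ) (M : ℝ) :
    (∫ w in (0:ℝ)..M, w^n * (∫ z in w..M, h z * (z - w)^k))
      = ((n.factorial : ℝ) * k.factorial / (n+k+1).factorial) *
          ∫ z in (0:ℝ)..M, h z * z^(n+k+1) := by
  set F : ℕ → ℝ → ℝ := fun j w => ∫ z in w..M, h z * z^j with hFdef
  have hcont : ∀ j : ℕ, Continuous (fun z => h z * z^j) := fun j => hh.mul (continuous_pow j)
  have hFc : ∀ j, Continuous (F j) := by
    intro j
    rw [continuous_iff_continuousAt]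
    exact fun w => (hasDerivAt_lower (hcont j) M w).continuousAt
  have inner : ∀ w : ℝ, (∫ z in w..M, h z * (z-w)^k)
      = ∑ j ∈ range (k+1), ((k.choose j : ℝ) * (-w)^(k-j)) * F j w := by
    intro w
    have expand : (fun z => h z * (z-w)^k)
        = (fun z => ∑ j ∈ range (k+1), ((k.choose j : ℝ) * (-w)^(k-j)) * (h z * z^j)) := by
      funext z
      rw [sub_eq_add_neg, add_pow, Finset.mul_sum]
      exact Finset.sum_congr rfl fun j _ => by ring
    rw [show (∫ z in w..M, h z * (z-w)^k)
        = ∫ z in w..M, ∑ j ∈ range (k+1), ((k.choose j : ℝ) * (-w)^(k-j)) * (h z * z^j) from by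
      rw [← expand]]
    rw [intervalIntegral.integral_finset_sum]
    · exact Finset.sum_congr rfl fun j _ => intervalIntegral.integral_const_mul _ _
    · exact fun j _ => (continuous_const.mul (hcont j)).intervalIntegrable _ _
  have step1 : (∫ w in (0:ℝ)..M, w^n * (∫ z in w..M, h z * (z - w)^k))
      = ∑ j ∈ range (k+1), ∫ w in (0:ℝ)..M,
          w^n * (((k.choose j : ℝ) * (-w)^(k-j)) * F j w) := by
    rw [show (fun w => w^n * (∫ z in w..M, h z * (z - w)^k))
        = (fun w => ∑ j ∈ range (k+1), w^n * (((k.choose j : ℝ) * (-w)^(k-j)) * F j w)) from by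
      funext w; rw [inner w, Finset.mul_sum]]
    exact intervalIntegral.integral_finset_sum fun j _ =>
      ((continuous_pow n).mul ((continuous_const.mul
        ((continuous_neg.pow _))).mul (hFc j))).intervalIntegrable _ _
  rw [step1]
  have term : ∀ j ∈ range (k+1), (∫ w in (0:ℝ)..M,
        w^n * (((k.choose j : ℝ) * (-w)^(k-j)) * F j w))
      = ((k.choose j : ℝ) * (-1)^(k-j) * (1/((n:ℝ)+(k-j : ℕ)+1))) *
          ∫ z in (0:ℝ)..M, h z * z^(n+k+1) := by
    intro j hj
    have hjk : j ≤ k := Nat.lt_succ_iff.mp (Finset.mem_range.mp hj)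
    have e1 : (fun w : ℝ => w^n * (((k.choose j : ℝ) * (-w)^(k-j)) * F j w))
        = fun w => ((k.choose j : ℝ) * (-1)^(k-j)) * (w^(n+(k-j)) * F j w) := by
      funext w
      rw [neg_pow, pow_add]
      ring
    rw [e1, intervalIntegral.integral_const_mul, ibp_step hh (n+(k-j)) j M]
    rw [show n+(k-j)+1+j = n+k+1 from by omega]
    have : ((n+(k-j) : ℕ) : ℝ) = (n:ℝ)+((k-j : ℕ) : ℝ) := by push_cast; ring
    rw [this]
    ring
  rw [Finset.sum_congr rfl term, ← Finset.sum_mul]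
  congr 1
  have hrefl : (∑ j ∈ range (k+1),
      (k.choose j : ℝ) * (-1)^(k-j) * (1/((n:ℝ)+(k-j : ℕ)+1)))
      = ∑ i ∈ range (k+1), (-1:ℝ)^i * (k.choose i) / ((n:ℝ)+i+1) := by
    rw [← Finset.sum_range_reflect (fun i => (-1:ℝ)^i * (k.choose i) / ((n:ℝ)+i+1)) (k+1)]
    refine Finset.sum_congr rfl fun j hj => ?_
    have hjk : j ≤ k := Nat.lt_succ_iff.mp (Finset.mem_range.mp hj)
    rw [show k+1-1-j = k-j from by omega, Nat.choose_symm hjk]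
    ring
  rw [hrefl, beta_sum k n]
  ring

open intervalIntegral Real in
/-- Substitution `x = exp y` in `∫ x in 1..B, h x / x`. -/
lemma sub_exp {B : ℝ} (hB : 0 < B) {h : ℝ → ℝ} (hh : ContinuousOn h (Set.uIcc 1 B)) :
    (∫ x in (1:ℝ)..B, h x / x) = ∫ y in (0:ℝ)..Real.log B, h (Real.exp y) := by
  have key := intervalIntegral.integral_comp_smul_deriv' (f := Real.exp) (f' := Real.exp)
    (g := fun x => h x / x) (a := 0) (b := Real.log B)
    (fun x _ => Real.hasDerivAt_exp x) (Real.continuous_exp.continuousOn) ?_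
  · rw [Real.exp_zero, Real.exp_log hB] at key
    rw [← key]
    refine intervalIntegral.integral_congr fun y _ => ?_
    have := Real.exp_pos y
    simp only [Function.comp, smul_eq_mul]
    field_simp
  · -- ContinuousOn (fun x => h x / x) (exp '' uIcc 0 (log B))
    have himg : Real.exp '' Set.uIcc 0 (Real.log B) ⊆ Set.uIcc 1 B := by
      rintro _ ⟨y, hy, rfl⟩
      rcases Set.mem_uIcc.1 hy with ⟨h1, h2⟩ | ⟨h1, h2⟩
      · refine Set.mem_uIcc.2 (Or.inl ⟨?_, ?_⟩)
        · calc (1:ℝ) = Real.exp 0 := Real.exp_zero.symm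
            _ ≤ Real.exp y := Real.exp_le_exp.2 h1
        · calc Real.exp y ≤ Real.exp (Real.log B) := Real.exp_le_exp.2 h2
            _ = B := Real.exp_log hB
      · refine Set.mem_uIcc.2 (Or.inr ⟨?_, ?_⟩)
        · calc B = Real.exp (Real.log B) := (Real.exp_log hB).symm
            _ ≤ Real.exp y := Real.exp_le_exp.2 h1
        · calc Real.exp y ≤ Real.exp 0 := Real.exp_le_exp.2 h2
            _ = 1 := Real.exp_zero
    refine ContinuousOn.mono ?_ himg
    apply hh.div continuousOn_id
    intro x hx
    have : 0 < x := by
      rcases Set.mem_uIcc.1 hx with ⟨h1, _⟩ | ⟨h1, _⟩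
      · exact lt_of_lt_of_le one_pos h1
      · exact lt_of_lt_of_le hB h1
    exact ne_of_gt this


open intervalIntegral Real in
lemma main_identity {f : ℝ → ℝ} (hf : Continuous f) {D : ℝ} (hD : 1 < D) :
    ∀ (a : List ℕ), (∀ i ∈ a, 0 < i) → ∀ t : ℝ, 1 ≤ t → t ≤ D →
    iterLogIntegral D f a t
      = ((a.map (fun i => ((i-1).factorial : ℝ))).prod / (a.sum.factorial : ℝ)) *
          ∫ y in (0:ℝ)..Real.log (D/t), f (t * Real.exp y) * y ^ a.sum := by
  intro a
  induction a with
  | nil =>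
    intro _ t ht1 ht2
    have ht0 : (0:ℝ) < t := lt_of_lt_of_le one_pos ht1
    have hB : 0 < D / t := div_pos (lt_trans one_pos hD) ht0
    show (∫ x in (1:ℝ)..(D / t), f (t * x) / x) = _
    rw [sub_exp hB (h := fun x => f (t * x)) ((hf.comp (continuous_const.mul continuous_id)).continuousOn)]
    simp
  | cons a as ih =>
    intro hpos t ht1 ht2
    have ht0 : (0:ℝ) < t := lt_of_lt_of_le one_pos ht1
    have hD0 : (0:ℝ) < D := lt_trans one_pos hD
    have hB : 0 < D / t := div_pos hD0 ht0
    have hB1 : 1 ≤ D / t := (one_le_div ht0).mpr ht2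
    have ha : 0 < a := hpos a List.mem_cons_self
    set s := as.sum with hs
    set Ca := ((as.map (fun i => ((i-1).factorial : ℝ))).prod / (s.factorial : ℝ)) with hCa
    set Qe : ℝ → ℝ := fun v => ∫ y in (0:ℝ)..(Real.log D - v), f (Real.exp (v + y)) * y ^ s
      with hQe
    have hQec : Continuous Qe := by
      apply intervalIntegral.continuous_parametric_intervalIntegral_of_continuous
        (f := fun v y => f (Real.exp (v + y)) * y ^ s)
      · exact ((hf.comp (Real.continuous_exp.comp (continuous_fst.add continuous_snd))).mul
          ((continuous_snd.pow s)))
      · exact continuous_const.sub continuous_id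
    -- Step 1: rewrite the integrand using the induction hypothesis
    have step1 : iterLogIntegral D f (a :: as) t
        = ∫ x in (1:ℝ)..(D/t), ((Real.log x) ^ (a-1) * (Ca * Qe (Real.log (t * x)))) / x := by
      show (∫ x in (1:ℝ)..(D / t), (Real.log x) ^ (a - 1) / x * iterLogIntegral D f as (t * x)) = _
      refine intervalIntegral.integral_congr fun x hx => ?_
      rw [Set.uIcc_of_le hB1] at hx
      obtain ⟨hx1, hx2⟩ := hx
      have hx0 : (0:ℝ) < x := lt_of_lt_of_le one_pos hx1
      have htx1 : 1 ≤ t * x := by nlinarith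
      have htx2 : t * x ≤ D := by
        have := (mul_le_mul_of_nonneg_left hx2 ht0.le)
        rwa [mul_div_cancel₀ D (ne_of_gt ht0)] at this
      have htx0 : (0:ℝ) < t * x := lt_of_lt_of_le one_pos htx1
      rw [ih (fun i hi => hpos i (List.mem_cons_of_mem a hi)) (t*x) htx1 htx2]
      have hq : (∫ y in (0:ℝ)..Real.log (D/(t*x)), f (t * x * Real.exp y) * y ^ s)
          = Qe (Real.log (t * x)) := by
        rw [hQe]
        simp only []
        rw [Real.log_div (ne_of_gt hD0) (ne_of_gt htx0)]
        refine intervalIntegral.integral_congr fun y _ => ?_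
        rw [Real.exp_add, Real.exp_log htx0]
      rw [hq]
      rw [div_mul_eq_mul_div]
    rw [step1]
    -- Step 2: substitution x = exp w
    have hsub : Set.uIcc (1:ℝ) (D/t) ⊆ {(0:ℝ)}ᶜ := by
      rw [Set.uIcc_of_le hB1]
      intro x hx
      exact ne_of_gt (lt_of_lt_of_le one_pos hx.1)
    have hlogt : ContinuousOn (fun x : ℝ => Real.log (t * x)) (Set.uIcc (1:ℝ) (D/t)) := by
      apply Real.continuousOn_log.comp (continuous_const.mul continuous_id).continuousOn
      rw [Set.uIcc_of_le hB1]
      intro x hx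
      simp only [Set.mem_compl_iff, Set.mem_singleton_iff, id, Pi.mul_apply]
      nlinarith [hx.1]
    have hcontOn : ContinuousOn
        (fun x => (Real.log x) ^ (a-1) * (Ca * Qe (Real.log (t * x)))) (Set.uIcc (1:ℝ) (D/t)) :=
      (((Real.continuousOn_log.mono hsub).pow _).mul
        (continuousOn_const.mul (hQec.comp_continuousOn hlogt)))
    rw [sub_exp hB hcontOn]
    -- Step 3: simplify the integrand
    set M := Real.log (D / t) with hM
    have hMeq : M = Real.log D - Real.log t := Real.log_div (ne_of_gt hD0) (ne_of_gt ht0)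
    have step3 : (∫ w in (0:ℝ)..M, (Real.log (Real.exp w)) ^ (a-1) * (Ca * Qe (Real.log (t * Real.exp w))))
        = Ca * ∫ w in (0:ℝ)..M, w ^ (a-1) *
            (∫ z in w..M, f (t * Real.exp z) * (z - w) ^ s) := by
      rw [← intervalIntegral.integral_const_mul]
      refine intervalIntegral.integral_congr fun w _ => ?_
      rw [Real.log_exp, Real.log_mul (ne_of_gt ht0) (Real.exp_ne_zero w), Real.log_exp]
      have hQval : Qe (Real.log t + w)
          = ∫ z in w..M, f (t * Real.exp z) * (z - w) ^ s := by
        rw [hQe]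
        simp only []
        have hend : Real.log D - (Real.log t + w) = M - w := by rw [hMeq]; ring
        rw [hend]
        have hcong : (fun y => f (Real.exp (Real.log t + w + y)) * y ^ s)
            = fun y => (fun z => f (t * Real.exp z) * (z - w) ^ s) (w + y) := by
          funext y
          simp only []
          rw [show Real.log t + w + y = Real.log t + (w + y) from by ring,
            Real.exp_add, Real.exp_log ht0, add_sub_cancel_left]
        rw [hcong, intervalIntegral.integral_comp_add_left
          (fun z => f (t * Real.exp z) * (z - w) ^ s) w, add_zero, add_sub_cancel]
      rw [hQval]
      ring
    rw [step3]
    -- Step 4: apply the core integral computation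
    rw [core_integral (h := fun z => f (t * Real.exp z))
      (by exact hf.comp (continuous_const.mul Real.continuous_exp)) (a-1) s M]
    -- Step 5: clean up the coefficient and exponent
    have hsum : (a :: as).sum = a - 1 + s + 1 := by
      simp only [List.sum_cons]
      omega
    have hcoef : Ca * (((a-1).factorial : ℝ) * (s.factorial : ℝ) / (((a-1)+s+1).factorial : ℝ))
        = (((a :: as).map (fun i => ((i-1).factorial : ℝ))).prod / (((a::as).sum).factorial : ℝ)) := by
      rw [List.map_cons, List.prod_cons, hCa, hsum]
      have h1 : ((s.factorial : ℕ) : ℝ) ≠ 0 := by positivity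
      have h2 : ((((a-1)+s+1).factorial : ℕ) : ℝ) ≠ 0 := by positivity
      field_simp
    rw [← hcoef, hsum]
    ring

open intervalIntegral in
lemma iterLogIntegral_congr {D : ℝ} (hD : 1 < D) {f g : ℝ → ℝ}
    (hfg : ∀ x ∈ Set.Icc (1:ℝ) D, f x = g x) :
    ∀ (a : List ℕ), ∀ t : ℝ, 1 ≤ t → t ≤ D →
      iterLogIntegral D f a t = iterLogIntegral D g a t := by
  intro a
  induction a with
  | nil =>
    intro t ht1 ht2
    have ht0 : (0:ℝ) < t := lt_of_lt_of_le one_pos ht1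
    have hB1 : 1 ≤ D / t := (one_le_div ht0).mpr ht2
    show (∫ x in (1:ℝ)..(D / t), f (t * x) / x) = ∫ x in (1:ℝ)..(D / t), g (t * x) / x
    refine intervalIntegral.integral_congr fun x hx => ?_
    rw [Set.uIcc_of_le hB1] at hx
    have htx1 : 1 ≤ t * x := by nlinarith [hx.1]
    have htx2 : t * x ≤ D := by
      have := mul_le_mul_of_nonneg_left hx.2 ht0.le
      rwa [mul_div_cancel₀ D (ne_of_gt ht0)] at this
    rw [hfg (t * x) ⟨htx1, htx2⟩]
  | cons a as ih =>
    intro t ht1 ht2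
    have ht0 : (0:ℝ) < t := lt_of_lt_of_le one_pos ht1
    have hB1 : 1 ≤ D / t := (one_le_div ht0).mpr ht2
    show (∫ x in (1:ℝ)..(D / t), (Real.log x) ^ (a - 1) / x * iterLogIntegral D f as (t * x))
      = ∫ x in (1:ℝ)..(D / t), (Real.log x) ^ (a - 1) / x * iterLogIntegral D g as (t * x)
    refine intervalIntegral.integral_congr fun x hx => ?_
    rw [Set.uIcc_of_le hB1] at hx
    have htx1 : 1 ≤ t * x := by nlinarith [hx.1]
    have htx2 : t * x ≤ D := by
      have := mul_le_mul_of_nonneg_left hx.2 ht0.le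
      rwa [mul_div_cancel₀ D (ne_of_gt ht0)] at this
    rw [ih (t * x) htx1 htx2]

theorem iterated_log_integral_general (m : ℕ) (hm : 0 < m) (a : List ℕ)
    (ha : a.length = m) (hpos : ∀ i ∈ a, 0 < i) (D : ℝ) (hD : 1 < D)
    (f : ℝ → ℝ) (hf : ContinuousOn f (Set.Icc 1 D)) :
    iterLogIntegral D f a 1 =
      ((a.map (fun i => (Nat.factorial (i - 1) : ℝ))).prod /
          (Nat.factorial a.sum : ℝ)) *
        ∫ x in (1:ℝ)..D, f x * (Real.log x) ^ a.sum / x := by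
  have hD0 : (0:ℝ) < D := lt_trans one_pos hD
  -- Extend f to a continuous function on all of ℝ
  set F : ℝ → ℝ := fun x => f (max 1 (min x D)) with hFdef
  have hmaps : ∀ x : ℝ, max 1 (min x D) ∈ Set.Icc (1:ℝ) D :=
    fun x => ⟨le_max_left _ _, max_le hD.le (min_le_right _ _)⟩
  have hF : Continuous F := by
    apply hf.comp_continuous
    · exact continuous_const.max (continuous_id.min continuous_const)
    · exact hmaps
  have hFeq : ∀ x ∈ Set.Icc (1:ℝ) D, F x = f x := by
    intro x hx
    rw [hFdef]
    simp only []
    rw [min_eq_left hx.2, max_eq_right hx.1]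
  have h1 : iterLogIntegral D f a 1 = iterLogIntegral D F a 1 :=
    iterLogIntegral_congr hD (fun x hx => (hFeq x hx).symm) a 1 le_rfl hD.le
  rw [h1, main_identity hF hD a hpos 1 le_rfl hD.le]
  have hrhs : (∫ x in (1:ℝ)..D, F x * (Real.log x) ^ a.sum / x)
      = ∫ y in (0:ℝ)..Real.log D, F (Real.exp y) * y ^ a.sum := by
    rw [sub_exp hD0 (h := fun x => F x * (Real.log x) ^ a.sum)]
    · refine intervalIntegral.integral_congr fun y _ => ?_
      rw [Real.log_exp]
    · refine ((hF.continuousOn).mul ((Real.continuousOn_log.mono ?_).pow _))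
      rw [Set.uIcc_of_le hD.le]
      intro x hx
      exact ne_of_gt (lt_of_lt_of_le one_pos hx.1)
  have hlhs : (∫ y in (0:ℝ)..Real.log (D/1), F (1 * Real.exp y) * y ^ a.sum)
      = ∫ y in (0:ℝ)..Real.log D, F (Real.exp y) * y ^ a.sum := by
    rw [div_one]
    refine intervalIntegral.integral_congr fun y _ => ?_
    rw [one_mul]
  rw [hlhs, ← hrhs]
  congr 1
  refine intervalIntegral.integral_congr fun x hx => ?_
  rw [Set.uIcc_of_le hD.le] at hx
  rw [hFeq x hx]
end

section
/- Mertens' theorem: ∑_{p ≤ y} (log p)/p = log y + O(1), i.e., there is a constant C such that for all y ≥ 2, |∑_{p ≤ y} (log p)/p − log y| ≤ C. -/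
open Finset Real Nat

namespace MertensAux

noncomputable def P (n : ℕ) : Finset ℕ := Finset.filter Nat.Prime (Finset.Icc 1 n)

lemma mem_P {n p : ℕ} : p ∈ P n ↔ p.Prime ∧ p ≤ n := by
  simp only [P, mem_filter, mem_Icc]
  exact ⟨fun ⟨⟨_, h2⟩, hp⟩ => ⟨hp, h2⟩, fun ⟨hp, h2⟩ => ⟨⟨hp.one_lt.le, h2⟩, hp⟩⟩

lemma log_factorial (n : ℕ) :
    Real.log (n !) = ∑ p ∈ P n, ((n !).factorization p : ℝ) * Real.log p := by
  have h0 : n ! ≠ 0 := Nat.factorial_ne_zero n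
  have hsub : (n !).primeFactors ⊆ P n := by
    intro p hp
    rw [Nat.mem_primeFactors] at hp
    exact mem_P.2 ⟨hp.1, (Nat.Prime.dvd_factorial hp.1).1 hp.2.1⟩
  conv_lhs => rw [← Nat.factorization_prod_pow_eq_self h0]
  rw [Nat.prod_factorization_eq_prod_primeFactors]
  push_cast
  rw [Real.log_prod (fun p hp => by
    have := (Nat.prime_of_mem_primeFactors hp).pos
    positivity)]
  simp_rw [Real.log_pow]
  refine Finset.sum_subset hsub (fun p hp hnp => ?_)
  have : (n !).factorization p = 0 := by
    rw [← Nat.support_factorization] at hnp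
    exact Finsupp.notMem_support_iff.mp hnp
  simp [this]

lemma fact_lower {n p : ℕ} (hp : p.Prime) (hpn : p ≤ n) :
    n / p ≤ (n !).factorization p := by
  haveI := Fact.mk hp
  rw [Nat.factorization_def _ hp,
    padicValNat_factorial (Nat.lt_succ_of_le (le_refl _))]
  have h1 : 1 ∈ Finset.Ico 1 (Nat.log p n + 1) := by
    simp [Nat.log_pos hp.one_lt hpn]
  calc n / p = n / p ^ 1 := by rw [pow_one]
    _ ≤ _ := Finset.single_le_sum (f := fun i => n / p ^ i)
        (fun i _ => Nat.zero_le _) h1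

lemma geom_aux {r : ℝ} (h0 : 0 ≤ r) (h1 : r < 1) (b : ℕ) :
    ∑ i ∈ Finset.Ico 1 b, r ^ i ≤ r * (1 - r)⁻¹ := by
  rw [Finset.sum_Ico_eq_sum_range]
  simp_rw [pow_add, pow_one]
  rw [← Finset.mul_sum]
  gcongr
  exact (Summable.sum_le_tsum _ (fun i _ => pow_nonneg h0 i)
    (summable_geometric_of_lt_one h0 h1)).trans_eq (tsum_geometric_of_lt_one h0 h1)

lemma fact_upper {n p : ℕ} (hp : p.Prime) :
    ((n !).factorization p : ℝ) ≤ n / (p - 1) := by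
  haveI := Fact.mk hp
  rw [Nat.factorization_def _ hp,
    padicValNat_factorial (Nat.lt_succ_of_le (le_refl _))]
  push_cast
  have hp1 : (1:ℝ) < p := by exact_mod_cast hp.one_lt
  have hp0 : (0:ℝ) < p := by linarith
  calc ∑ i ∈ Finset.Ico 1 (Nat.log p n + 1), ((n / p ^ i : ℕ) : ℝ)
      ≤ ∑ i ∈ Finset.Ico 1 (Nat.log p n + 1), (n : ℝ) * (1/(p:ℝ)) ^ i := by
        refine Finset.sum_le_sum fun i _ => ?_
        rw [div_pow, one_pow, mul_one_div]
        exact (Nat.cast_div_le).trans (by push_cast; norm_num)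
    _ = (n:ℝ) * ∑ i ∈ Finset.Ico 1 (Nat.log p n + 1), (1/(p:ℝ)) ^ i :=
        (Finset.mul_sum _ _ _).symm
    _ ≤ (n:ℝ) * ((1/(p:ℝ)) * (1 - 1/(p:ℝ))⁻¹) :=
        mul_le_mul_of_nonneg_left
          (geom_aux (by positivity) (by rw [div_lt_one hp0]; linarith) _)
          (Nat.cast_nonneg n)
    _ = n / (p - 1) := by
        have h1 : (p:ℝ) ≠ 0 := ne_of_gt hp0
        have h2 : (p:ℝ) - 1 ≠ 0 := by intro h; apply absurd hp1; linarith [sub_eq_zero.mp h]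
        have h3 : 1 - 1/(p:ℝ) ≠ 0 := by
          intro h
          have : (1:ℝ)/p = 1 := by linarith [sub_eq_zero.mp h]
          rw [div_eq_one_iff_eq h1] at this
          exact absurd hp1 (by rw [← this]; simp)
        field_simp

lemma P_eq (n : ℕ) : P n = Finset.filter Nat.Prime (Finset.range (n+1)) := by
  ext p
  simp only [P, mem_filter, mem_Icc, mem_range, Nat.lt_succ_iff]
  exact ⟨fun ⟨⟨_, h2⟩, hp⟩ => ⟨h2, hp⟩, fun ⟨h2, hp⟩ => ⟨⟨hp.one_lt.le, h2⟩, hp⟩⟩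

lemma theta_le (n : ℕ) : ∑ p ∈ P n, Real.log p ≤ n * Real.log 4 := by
  have h1 : ∑ p ∈ P n, Real.log p = Real.log (primorial n) := by
    rw [P_eq, primorial]
    push_cast
    rw [Real.log_prod]
    intro p hp
    exact_mod_cast (Finset.mem_filter.mp hp).2.pos.ne'
  rw [h1]
  calc Real.log (primorial n) ≤ Real.log ((4:ℕ) ^ n) := by
        have := primorial_le_4_pow n
        gcongr
        · exact_mod_cast primorial_pos n
        · exact_mod_cast this
    _ = n * Real.log 4 := by push_cast; rw [Real.log_pow]

noncomputable def K : ℝ := 4 * ∑' k : ℕ, 1 / (k : ℝ) ^ ((3:ℝ)/2)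

lemma g_bound {k : ℕ} (hk : 2 ≤ k) :
    Real.log k / (k * ((k:ℝ) - 1)) ≤ 4 * (1 / (k : ℝ) ^ ((3:ℝ)/2)) := by
  have hk2 : (2:ℝ) ≤ k := by exact_mod_cast hk
  have hk0 : (0:ℝ) < k := by linarith
  have hlog : Real.log k ≤ 2 * Real.sqrt k := by
    have h1 : Real.log k = 2 * Real.log (Real.sqrt k) := by
      rw [Real.log_sqrt hk0.le]; ring
    have h2 : Real.log (Real.sqrt k) ≤ Real.sqrt k - 1 :=
      Real.log_le_sub_one_of_pos (Real.sqrt_pos.2 hk0)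
    nlinarith [Real.sqrt_nonneg (k:ℝ)]
  have hrw : (1 : ℝ) / (k : ℝ) ^ ((3:ℝ)/2) = Real.sqrt k / (k:ℝ)^2 := by
    rw [Real.sqrt_eq_rpow, ← Real.rpow_natCast (k:ℝ) 2,
      div_eq_div_iff (by positivity) (by positivity), one_mul, ← Real.rpow_add hk0]
    norm_num
  rw [hrw]
  calc Real.log k / ((k:ℝ) * ((k:ℝ) - 1))
      ≤ (2 * Real.sqrt k) / ((k:ℝ)^2 / 2) :=
        div_le_div₀ (by positivity) hlog (by positivity) (by nlinarith)
    _ = 4 * (Real.sqrt k / (k:ℝ)^2) := by field_simp; ring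

lemma summable_aux : Summable (fun k : ℕ => 1 / (k : ℝ) ^ ((3:ℝ)/2)) := by
  simpa using (Real.summable_one_div_nat_rpow (p := (3:ℝ)/2)).2 (by norm_num)

lemma K_nonneg : 0 ≤ K := by
  unfold K
  have : 0 ≤ ∑' k : ℕ, 1 / (k : ℝ) ^ ((3:ℝ)/2) :=
    tsum_nonneg fun k => by positivity
  linarith

lemma tail_le (n : ℕ) : ∑ p ∈ P n, Real.log p / (p * ((p:ℝ) - 1)) ≤ K := by
  have hsub : P n ⊆ Finset.Icc 2 n := by
    intro p hp
    simp only [P, Finset.mem_filter, Finset.mem_Icc] at hp ⊢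
    exact ⟨hp.2.two_le, hp.1.2⟩
  calc ∑ p ∈ P n, Real.log p / (p * ((p:ℝ) - 1))
      ≤ ∑ k ∈ Finset.Icc 2 n, Real.log k / (k * ((k:ℝ) - 1)) := by
        refine Finset.sum_le_sum_of_subset_of_nonneg hsub fun k hk _ => ?_
        have hk2 : 2 ≤ k := (Finset.mem_Icc.mp hk).1
        have : (2:ℝ) ≤ k := by exact_mod_cast hk2
        have h1 : (0:ℝ) ≤ Real.log k := Real.log_nonneg (by linarith)
        exact div_nonneg h1 (by nlinarith)
    _ ≤ ∑ k ∈ Finset.Icc 2 n, 4 * (1 / (k : ℝ) ^ ((3:ℝ)/2)) :=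
        Finset.sum_le_sum fun k hk => g_bound (Finset.mem_Icc.mp hk).1
    _ = 4 * ∑ k ∈ Finset.Icc 2 n, 1 / (k : ℝ) ^ ((3:ℝ)/2) := by rw [Finset.mul_sum]
    _ ≤ K := by
        rw [K]
        gcongr
        exact Summable.sum_le_tsum _ (fun k _ => by positivity) summable_aux

lemma log_fact_upper (n : ℕ) : Real.log (n !) ≤ (n : ℝ) * Real.log n := by
  calc Real.log (n !) ≤ Real.log ((n:ℝ) ^ n) := by
        gcongr
        exact_mod_cast Nat.factorial_le_pow n
    _ = (n : ℝ) * Real.log n := by rw [Real.log_pow]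

lemma log_fact_lower (n : ℕ) : (n : ℝ) * Real.log n - n ≤ Real.log (n !) := by
  rcases Nat.eq_zero_or_pos n with rfl | hn
  · simp
  have h := Real.pow_div_factorial_le_exp (x := (n:ℝ)) (Nat.cast_nonneg n) n
  have hf : (0:ℝ) < (n ! : ℕ) := by exact_mod_cast Nat.factorial_pos n
  have h2 : (n:ℝ) ^ n ≤ Real.exp n * (n ! : ℕ) := by
    rw [div_le_iff₀ hf] at h
    linarith
  have h3 : Real.log ((n:ℝ) ^ n) ≤ Real.log (Real.exp n * (n ! : ℕ)) :=
    Real.log_le_log (by positivity) h2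
  rw [Real.log_pow, Real.log_mul (Real.exp_ne_zero _) hf.ne', Real.log_exp] at h3
  linarith

lemma key (n : ℕ) (hn : 2 ≤ n) :
    |(∑ p ∈ P n, Real.log p / p) - Real.log n| ≤ Real.log 4 + 1 + K := by
  set S := ∑ p ∈ P n, Real.log p / p with hS
  have hn0 : (0:ℝ) < n := by positivity
  have hn2 : (2:ℝ) ≤ n := by exact_mod_cast hn
  -- facts about each prime p in P n
  have hplog : ∀ p ∈ P n, (0:ℝ) ≤ Real.log p := fun p hp =>
    Real.log_nonneg (by exact_mod_cast (mem_P.1 hp).1.one_lt.le)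
  -- lower bound on log n!
  have hlow : (n:ℝ) * S - n * Real.log 4 ≤ Real.log (n !) := by
    rw [log_factorial]
    have : ∀ p ∈ P n, (n:ℝ)/p * Real.log p - Real.log p
        ≤ ((n !).factorization p : ℝ) * Real.log p := by
      intro p hp
      obtain ⟨hp1, hp2⟩ := mem_P.1 hp
      have hppos : (0:ℝ) < p := by exact_mod_cast hp1.pos
      have hle : ((n / p : ℕ) : ℝ) ≤ ((n !).factorization p : ℝ) := by
        exact_mod_cast fact_lower hp1 hp2
      have hfloor : (n:ℝ)/p - 1 ≤ ((n / p : ℕ) : ℝ) := by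
        have := Nat.lt_mul_div_succ n hp1.pos
        have h' : (n:ℝ) < p * (((n / p : ℕ) : ℝ) + 1) := by exact_mod_cast this
        rw [div_sub_one hppos.ne', div_le_iff₀ hppos]
        nlinarith
      have := hplog p hp
      nlinarith
    calc (n:ℝ) * S - n * Real.log 4
        ≤ (n:ℝ) * S - ∑ p ∈ P n, Real.log p := by
          have := theta_le n; linarith
      _ = ∑ p ∈ P n, ((n:ℝ)/p * Real.log p - Real.log p) := by
          rw [Finset.sum_sub_distrib, hS, Finset.mul_sum]
          congr 1
          refine Finset.sum_congr rfl fun p hp => ?_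
          rw [div_mul_eq_mul_div, mul_div_assoc]
      _ ≤ _ := Finset.sum_le_sum this
  -- upper bound on log n!
  have hup : Real.log (n !) ≤ (n:ℝ) * S + n * K := by
    rw [log_factorial]
    have hterm : ∀ p ∈ P n, ((n !).factorization p : ℝ) * Real.log p
        ≤ (n:ℝ) * (Real.log p / p) + (n:ℝ) * (Real.log p / (p * ((p:ℝ) - 1))) := by
      intro p hp
      obtain ⟨hp1, hp2⟩ := mem_P.1 hp
      have hp1' : (1:ℝ) < p := by exact_mod_cast hp1.one_lt
      have hppos : (0:ℝ) < p := by linarith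
      have h1 : ((n !).factorization p : ℝ) * Real.log p
          ≤ ((n:ℝ) / ((p:ℝ) - 1)) * Real.log p :=
        mul_le_mul_of_nonneg_right (fact_upper hp1) (hplog p hp)
      have h2 : ((n:ℝ) / ((p:ℝ) - 1)) * Real.log p
          = (n:ℝ) * (Real.log p / p) + (n:ℝ) * (Real.log p / (p * ((p:ℝ) - 1))) := by
        have hpm : (p:ℝ) - 1 ≠ 0 := by intro h; apply absurd hp1'; linarith [sub_eq_zero.mp h]
        field_simp
        ring
      linarith
    calc ∑ p ∈ P n, ((n !).factorization p : ℝ) * Real.log p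
        ≤ ∑ p ∈ P n, ((n:ℝ) * (Real.log p / p) + (n:ℝ) * (Real.log p / (p * ((p:ℝ) - 1)))) :=
          Finset.sum_le_sum hterm
      _ = (n:ℝ) * S + (n:ℝ) * ∑ p ∈ P n, Real.log p / (p * ((p:ℝ) - 1)) := by
          rw [Finset.sum_add_distrib, ← Finset.mul_sum, ← Finset.mul_sum]
      _ ≤ (n:ℝ) * S + n * K := by
          have := tail_le n
          nlinarith
  -- Stirling bounds
  have hst1 := log_fact_lower n
  have hst2 := log_fact_upper n
  -- combine
  have hA : S - Real.log n ≤ Real.log 4 := by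
    have h : (n:ℝ) * S - n * Real.log 4 ≤ (n:ℝ) * Real.log n := le_trans hlow hst2
    have := (div_le_div_iff_of_pos_right hn0).mpr h
    nlinarith
  have hB : Real.log n - S ≤ 1 + K := by
    have h : (n:ℝ) * Real.log n - n ≤ (n:ℝ) * S + n * K := le_trans hst1 hup
    nlinarith
  rw [abs_sub_le_iff]
  have hK := K_nonneg
  have hlog4 : (0:ℝ) ≤ Real.log 4 := Real.log_nonneg (by norm_num)
  constructor <;> linarith

end MertensAux

open MertensAux in
theorem mertens_first_theorem :
    ∃ C : ℝ, ∀ y : ℝ, 2 ≤ y →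
      |(∑ p ∈ Finset.filter Nat.Prime (Finset.Icc 1 ⌊y⌋₊), Real.log p / p) -
          Real.log y| ≤ C := by
  refine ⟨Real.log 4 + 1 + K + Real.log 2, fun y hy => ?_⟩
  set n : ℕ := ⌊y⌋₊ with hn
  have hn2 : 2 ≤ n := Nat.le_floor (by exact_mod_cast hy)
  have hn0 : (0:ℝ) < n := by positivity
  have hy0 : (0:ℝ) < y := by linarith
  have h1 : (n:ℝ) ≤ y := Nat.floor_le hy0.le
  have h2 : y < (n:ℝ) + 1 := Nat.lt_floor_add_one y
  have h3 : (n:ℝ) + 1 ≤ 2 * n := by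
    have : (2:ℝ) ≤ n := by exact_mod_cast hn2
    linarith
  have hlog1 : Real.log n ≤ Real.log y := Real.log_le_log hn0 h1
  have hlog2 : Real.log y ≤ Real.log n + Real.log 2 := by
    calc Real.log y ≤ Real.log (2 * n) :=
          Real.log_le_log hy0 (by linarith)
      _ = Real.log 2 + Real.log n := Real.log_mul (by norm_num) hn0.ne'
      _ = Real.log n + Real.log 2 := by ring
  have hkey := key n hn2
  have : |(∑ p ∈ P n, Real.log p / p) - Real.log y|
      ≤ Real.log 4 + 1 + K + Real.log 2 := by
    rw [abs_sub_le_iff] at hkey ⊢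
    have hl2 : (0:ℝ) ≤ Real.log 2 := Real.log_nonneg (by norm_num)
    constructor <;> [linarith [hkey.1]; linarith [hkey.2]]
  simpa [P] using this
end

section
/- For real s ≥ 1 and continuous h : [0,1]³ → ℝ, the change of variables u = 1 − log x₁/log K, v = 1 − log x₂/log K, w = 1 − log(x₁x₂x₃)/log K transforms ∫₁^K (1/x₁) ∫₁^{K/x₁} (1/x₂) ∫₁^{K/(x₁x₂)} h(1−log x₁/log K, 1−log x₂/log K, 1−log(x₁x₂x₃)/log K) (log x₃)^{s−1}/x₃ dx₃ dx₂ dx₁ into (log K)^{s+2} ∫₀¹ ∫_{1−u}^1 ∫₀^{u+v−1} (u+v−w−1)^{s−1} h(u,v,w) dw dv du. -/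
open intervalIntegral MeasureTheory Set

/-- The basic log substitution: `t = c₀ - log x / L`. -/
lemma key_sub {L : ℝ} (hL : 0 < L) {g : ℝ → ℝ} (hg : Continuous g) (c₀ c : ℝ) :
    ∫ x in (1:ℝ)..Real.exp (L * c), (1 / x) * g (c₀ - Real.log x / L)
      = L * ∫ t in (c₀ - c)..c₀, g t := by
  have hE : 0 < Real.exp (L * c) := Real.exp_pos _
  have hpos : ∀ x ∈ uIcc (1:ℝ) (Real.exp (L * c)), 0 < x := fun x hx =>
    lt_of_lt_of_le (lt_min one_pos hE) hx.1
  have hder : ∀ x ∈ uIcc (1:ℝ) (Real.exp (L * c)),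
      HasDerivAt (fun x => c₀ - Real.log x / L) (-(1 / (L * x))) x := by
    intro x hx
    have hx0 : x ≠ 0 := (hpos x hx).ne'
    have := ((Real.hasDerivAt_log hx0).div_const L).const_sub c₀
    exact this.congr_deriv (by ring)
  have hcont : ContinuousOn (fun x : ℝ => -(1 / (L * x))) (uIcc 1 (Real.exp (L * c))) := by
    apply ContinuousOn.neg
    apply ContinuousOn.div continuousOn_const (continuous_const.mul continuous_id).continuousOn
    intro x hx
    exact mul_ne_zero hL.ne' (hpos x hx).ne'
  have key := integral_comp_smul_deriv hder hcont hg
  calc ∫ x in (1:ℝ)..Real.exp (L * c), (1 / x) * g (c₀ - Real.log x / L)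
      = ∫ x in (1:ℝ)..Real.exp (L * c),
          (-L) * ((-(1 / (L * x))) • (g ∘ fun y => c₀ - Real.log y / L) x) := by
        apply intervalIntegral.integral_congr
        intro x _
        simp only [Function.comp, smul_eq_mul]
        rcases eq_or_ne x 0 with rfl | hx0
        · simp
        · field_simp
    _ = (-L) * ∫ x in (1:ℝ)..Real.exp (L * c),
          (-(1 / (L * x))) • (g ∘ fun y => c₀ - Real.log y / L) x :=
        intervalIntegral.integral_const_mul _ _
    _ = (-L) * ∫ t in ((fun y => c₀ - Real.log y / L) 1)..((fun y => c₀ - Real.log y / L)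
          (Real.exp (L * c))), g t := by rw [key]
    _ = L * ∫ t in (c₀ - c)..c₀, g t := by
        simp only [Real.log_one, Real.log_exp]
        rw [show c₀ - 0 / L = c₀ by ring, show c₀ - L * c / L = c₀ - c by field_simp]
        rw [intervalIntegral.integral_symm (c₀ - c) c₀]
        ring

noncomputable def Jf (s : ℝ) (H : ℝ → ℝ → ℝ → ℝ) (a v : ℝ) : ℝ :=
  ∫ w in (0:ℝ)..(a + v - 1), (a + v - w - 1) ^ (s - 1) * H a v w

lemma Jf_cont {s : ℝ} (hs : 1 ≤ s) {H : ℝ → ℝ → ℝ → ℝ}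
    (HC : Continuous fun p : ℝ × ℝ × ℝ => H p.1 p.2.1 p.2.2) :
    Continuous fun p : ℝ × ℝ => Jf s H p.1 p.2 := by
  have hF : Continuous (Function.uncurry fun (p : ℝ × ℝ) (w : ℝ) =>
      (p.1 + p.2 - w - 1) ^ (s - 1) * H p.1 p.2 w) := by
    apply Continuous.mul
    · exact Continuous.rpow_const (by fun_prop) (fun x => Or.inr (by linarith))
    · exact HC.comp (show Continuous fun q : (ℝ × ℝ) × ℝ => (q.1.1, q.1.2, q.2) by fun_prop)
  exact intervalIntegral.continuous_parametric_intervalIntegral_of_continuous hF (by fun_prop)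

lemma inner_step {L s : ℝ} (hL : 0 < L) (hs : 1 ≤ s) {H : ℝ → ℝ → ℝ → ℝ}
    (HC : Continuous fun p : ℝ × ℝ × ℝ => H p.1 p.2.1 p.2.2)
    (a b : ℝ) (hab : 0 ≤ a + b - 1) :
    ∫ x in (1:ℝ)..Real.exp (L * (a + b - 1)),
        H a b ((a + b - 1) - Real.log x / L) * Real.log x ^ (s - 1) / x
      = L ^ s * Jf s H a b := by
  set c := a + b - 1 with hc
  have hg : Continuous fun t : ℝ => H a b t * (L * (c - t)) ^ (s - 1) := by
    apply Continuous.mul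
    · exact HC.comp (show Continuous fun t : ℝ => (a, b, t) by fun_prop)
    · exact Continuous.rpow_const (by fun_prop) (fun x => Or.inr (by linarith))
  have h2 := key_sub hL hg c c
  rw [show c - c = 0 by ring] at h2
  calc ∫ x in (1:ℝ)..Real.exp (L * c),
        H a b (c - Real.log x / L) * Real.log x ^ (s - 1) / x
      = ∫ x in (1:ℝ)..Real.exp (L * c),
          (1 / x) * (fun t => H a b t * (L * (c - t)) ^ (s - 1)) (c - Real.log x / L) := by
        apply intervalIntegral.integral_congr
        intro x _
        have hx : L * (c - (c - Real.log x / L)) = Real.log x := by field_simp; ring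
        simp only [hx]
        ring
    _ = L * ∫ t in (0:ℝ)..c, H a b t * (L * (c - t)) ^ (s - 1) := h2
    _ = L * ∫ t in (0:ℝ)..c, L ^ (s - 1) * ((a + b - t - 1) ^ (s - 1) * H a b t) := by
        congr 1
        apply intervalIntegral.integral_congr
        intro t ht
        rw [uIcc_of_le hab] at ht
        show H a b t * (L * (c - t)) ^ (s - 1)
          = L ^ (s - 1) * ((a + b - t - 1) ^ (s - 1) * H a b t)
        have h1t : 0 ≤ c - t := by linarith [ht.2]
        rw [Real.mul_rpow hL.le h1t, show c - t = a + b - t - 1 by rw [hc]; ring]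
        ring
    _ = L ^ s * Jf s H a b := by
        rw [intervalIntegral.integral_const_mul, ← mul_assoc]
        have hpow : L * L ^ (s - 1) = L ^ s := by
          have h1 : L ^ (1 + (s - 1)) = L ^ (1:ℝ) * L ^ (s - 1) := Real.rpow_add hL 1 (s - 1)
          rw [Real.rpow_one] at h1
          rw [← h1]
          norm_num
        rw [hpow]
        rfl


lemma middle_step {L s : ℝ} (hL : 0 < L) (hs : 1 ≤ s) {H : ℝ → ℝ → ℝ → ℝ}
    (HC : Continuous fun p : ℝ × ℝ × ℝ => H p.1 p.2.1 p.2.2) (a : ℝ) :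
    ∫ x in (1:ℝ)..Real.exp (L * a), (1 / x) * (L ^ s * Jf s H a (1 - Real.log x / L))
      = L ^ (s + 1) * ∫ v in (1 - a)..1, Jf s H a v := by
  have h2 : Continuous fun v : ℝ => ((a, v) : ℝ × ℝ) := by fun_prop
  have hcv := (Jf_cont hs HC).comp h2
  simp only [Function.comp_def] at hcv
  have hg : Continuous fun v : ℝ => L ^ s * Jf s H a v := continuous_const.mul hcv
  rw [key_sub hL hg 1 a, intervalIntegral.integral_const_mul, ← mul_assoc]
  congr 1
  have h1 : L ^ (s + 1) = L ^ s * L ^ (1:ℝ) := Real.rpow_add hL s 1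
  rw [h1, Real.rpow_one]
  ring

lemma Mf_cont {s : ℝ} (hs : 1 ≤ s) {H : ℝ → ℝ → ℝ → ℝ}
    (HC : Continuous fun p : ℝ × ℝ × ℝ => H p.1 p.2.1 p.2.2) :
    Continuous fun a : ℝ => ∫ v in (1 - a)..1, Jf s H a v := by
  have hJ : Continuous (Function.uncurry fun (a : ℝ) (v : ℝ) => Jf s H a v) := Jf_cont hs HC
  have h1 : Continuous fun a : ℝ => ∫ v in (0:ℝ)..1, Jf s H a v :=
    intervalIntegral.continuous_parametric_intervalIntegral_of_continuous' hJ 0 1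
  have h2 : Continuous fun a : ℝ => ∫ v in (0:ℝ)..(1 - a), Jf s H a v :=
    intervalIntegral.continuous_parametric_intervalIntegral_of_continuous hJ (by fun_prop)
  apply (h1.sub h2).congr
  intro a
  have h2a : Continuous fun v : ℝ => ((a, v) : ℝ × ℝ) := by fun_prop
  have hcv := (Jf_cont hs HC).comp h2a
  simp only [Function.comp_def] at hcv
  exact intervalIntegral.integral_interval_sub_left
    (hcv.intervalIntegrable _ _) (hcv.intervalIntegrable _ _)

theorem triple_log_substitution_integral (K s : ℝ) (hK : 1 < K) (hs : 1 ≤ s)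
    (h : ℝ → ℝ → ℝ → ℝ)
    (hh : ContinuousOn (fun p : ℝ × ℝ × ℝ => h p.1 p.2.1 p.2.2)
      (Set.Icc 0 1 ×ˢ Set.Icc 0 1 ×ˢ Set.Icc 0 1)) :
    (∫ x₁ in (1:ℝ)..K, (1 / x₁) *
        ∫ x₂ in (1:ℝ)..(K / x₁), (1 / x₂) *
          ∫ x₃ in (1:ℝ)..(K / (x₁ * x₂)),
            h (1 - Real.log x₁ / Real.log K) (1 - Real.log x₂ / Real.log K)
                (1 - Real.log (x₁ * x₂ * x₃) / Real.log K) *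
              Real.log x₃ ^ (s - 1) / x₃) =
      Real.log K ^ (s + 2) *
        ∫ u in (0:ℝ)..1, ∫ v in (1 - u)..1, ∫ w in (0:ℝ)..(u + v - 1),
          (u + v - w - 1) ^ (s - 1) * h u v w := by
  have hK0 : (0:ℝ) < K := lt_trans one_pos hK
  obtain ⟨L, hLdef⟩ : ∃ t : ℝ, t = Real.log K := ⟨_, rfl⟩
  have hL : 0 < L := hLdef ▸ Real.log_pos hK
  rw [← hLdef]
  obtain ⟨H, hHdef⟩ : ∃ H' : ℝ → ℝ → ℝ → ℝ,
      H' = fun u v w => h (max 0 (min 1 u)) (max 0 (min 1 v)) (max 0 (min 1 w)) := ⟨_, rfl⟩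
  have hmem : ∀ x : ℝ, max 0 (min 1 x) ∈ Set.Icc (0:ℝ) 1 :=
    fun x => ⟨le_max_left _ _, max_le zero_le_one (min_le_left _ _)⟩
  have hproj : Continuous fun p : ℝ × ℝ × ℝ =>
      ((max 0 (min 1 p.1), max 0 (min 1 p.2.1), max 0 (min 1 p.2.2)) : ℝ × ℝ × ℝ) := by
    fun_prop
  have HC : Continuous fun p : ℝ × ℝ × ℝ => H p.1 p.2.1 p.2.2 := by
    rw [hHdef]
    exact hh.comp_continuous hproj (fun p => ⟨hmem _, hmem _, hmem _⟩)
  have hH : ∀ u v w : ℝ, u ∈ Set.Icc (0:ℝ) 1 → v ∈ Set.Icc (0:ℝ) 1 → w ∈ Set.Icc (0:ℝ) 1 →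
      H u v w = h u v w := by
    intro u v w hu hv hw
    rw [hHdef]
    simp only
    rw [min_eq_right hu.2, max_eq_right hu.1, min_eq_right hv.2, max_eq_right hv.1,
      min_eq_right hw.2, max_eq_right hw.1]
  have hMc : Continuous fun u : ℝ => L ^ (s + 1) * ∫ v in (1 - u)..1, Jf s H u v :=
    continuous_const.mul (Mf_cont hs HC)
  calc (∫ x₁ in (1:ℝ)..K, (1 / x₁) *
        ∫ x₂ in (1:ℝ)..(K / x₁), (1 / x₂) *
          ∫ x₃ in (1:ℝ)..(K / (x₁ * x₂)),
            h (1 - Real.log x₁ / L) (1 - Real.log x₂ / L)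
                (1 - Real.log (x₁ * x₂ * x₃) / L) *
              Real.log x₃ ^ (s - 1) / x₃)
      = ∫ x₁ in (1:ℝ)..K, (1 / x₁) *
          ∫ x₂ in (1:ℝ)..(K / x₁), (1 / x₂) *
            (L ^ s * Jf s H (1 - Real.log x₁ / L) (1 - Real.log x₂ / L)) := by
        apply intervalIntegral.integral_congr
        intro x₁ hx₁
        rw [Set.uIcc_of_le hK.le] at hx₁
        have hx₁1 : 1 ≤ x₁ := hx₁.1
        have hx₁0 : 0 < x₁ := lt_of_lt_of_le one_pos hx₁1
        simp only
        congr 1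
        apply intervalIntegral.integral_congr
        intro x₂ hx₂
        have hbk : 1 ≤ K / x₁ := (one_le_div hx₁0).2 hx₁.2
        rw [Set.uIcc_of_le hbk] at hx₂
        have hx₂1 : 1 ≤ x₂ := hx₂.1
        have hx₂0 : 0 < x₂ := lt_of_lt_of_le one_pos hx₂1
        have hx₂K : x₁ * x₂ ≤ K := by
          rw [mul_comm]
          exact (le_div_iff₀ hx₁0).1 hx₂.2
        simp only
        congr 1
        obtain ⟨a, hadef⟩ : ∃ t : ℝ, t = 1 - Real.log x₁ / L := ⟨_, rfl⟩
        obtain ⟨b, hbdef⟩ : ∃ t : ℝ, t = 1 - Real.log x₂ / L := ⟨_, rfl⟩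
        rw [← hadef, ← hbdef]
        have hlogK : Real.log x₁ + Real.log x₂ ≤ L := by
          rw [hLdef, ← Real.log_mul hx₁0.ne' hx₂0.ne']
          exact Real.log_le_log (by positivity) hx₂K
        have hlx₁ : 0 ≤ Real.log x₁ := Real.log_nonneg hx₁1
        have hlx₂ : 0 ≤ Real.log x₂ := Real.log_nonneg hx₂1
        have hab : 0 ≤ a + b - 1 := by
          have h5 := (div_le_one hL).2 hlogK
          rw [add_div] at h5
          rw [hadef, hbdef]
          linarith
        have hLc : L * (a + b - 1) = L - Real.log x₁ - Real.log x₂ := by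
          rw [hadef, hbdef]
          field_simp
          ring
        have hEbound : K / (x₁ * x₂) = Real.exp (L * (a + b - 1)) := by
          rw [hLc, hLdef, Real.exp_sub, Real.exp_sub, Real.exp_log hK0, Real.exp_log hx₁0,
            Real.exp_log hx₂0, div_div]
        rw [hEbound, ← inner_step hL hs HC a b hab]
        apply intervalIntegral.integral_congr
        intro x₃ hx₃
        have hbE : (1:ℝ) ≤ Real.exp (L * (a + b - 1)) :=
          Real.one_le_exp (mul_nonneg hL.le hab)
        rw [Set.uIcc_of_le hbE] at hx₃
        have hx₃1 : 1 ≤ x₃ := hx₃.1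
        have hx₃0 : 0 < x₃ := lt_of_lt_of_le one_pos hx₃1
        have hlog3 : Real.log x₃ ≤ L * (a + b - 1) := by
          have := Real.log_le_log hx₃0 hx₃.2
          rwa [Real.log_exp] at this
        have harg : 1 - Real.log (x₁ * x₂ * x₃) / L = (a + b - 1) - Real.log x₃ / L := by
          rw [Real.log_mul (mul_ne_zero hx₁0.ne' hx₂0.ne') hx₃0.ne',
            Real.log_mul hx₁0.ne' hx₂0.ne', hadef, hbdef]
          field_simp
          ring
        have ha01 : a ∈ Set.Icc (0:ℝ) 1 := by
          have h6 : Real.log x₁ ≤ L := hLdef ▸ Real.log_le_log hx₁0 hx₁.2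
          have h7 := (div_le_one hL).2 h6
          have h8 : 0 ≤ Real.log x₁ / L := div_nonneg hlx₁ hL.le
          rw [hadef]
          constructor <;> linarith
        have hb01 : b ∈ Set.Icc (0:ℝ) 1 := by
          have hx₂K' : x₂ ≤ K := le_trans hx₂.2 (div_le_self hK0.le hx₁1)
          have h6 : Real.log x₂ ≤ L := hLdef ▸ Real.log_le_log hx₂0 hx₂K'
          have h7 := (div_le_one hL).2 h6
          have h8 : 0 ≤ Real.log x₂ / L := div_nonneg hlx₂ hL.le
          rw [hbdef]
          constructor <;> linarith
        have hw01 : (a + b - 1) - Real.log x₃ / L ∈ Set.Icc (0:ℝ) 1 := by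
          have h9 : Real.log x₃ / L ≤ a + b - 1 := (div_le_iff₀' hL).2 hlog3
          have h10 : 0 ≤ Real.log x₃ / L := div_nonneg (Real.log_nonneg hx₃1) hL.le
          have h11 : a ≤ 1 := ha01.2
          have h12 : b ≤ 1 := hb01.2
          constructor <;> linarith
        simp only
        rw [harg, hH a b ((a + b - 1) - Real.log x₃ / L) ha01 hb01 hw01]
    _ = ∫ x₁ in (1:ℝ)..K, (1 / x₁) *
          (L ^ (s + 1) *
            ∫ v in (1 - (1 - Real.log x₁ / L))..1, Jf s H (1 - Real.log x₁ / L) v) := by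
        apply intervalIntegral.integral_congr
        intro x₁ hx₁
        rw [Set.uIcc_of_le hK.le] at hx₁
        have hx₁1 : 1 ≤ x₁ := hx₁.1
        have hx₁0 : 0 < x₁ := lt_of_lt_of_le one_pos hx₁1
        simp only
        congr 1
        have hb2 : K / x₁ = Real.exp (L * (1 - Real.log x₁ / L)) := by
          have he : L * (1 - Real.log x₁ / L) = L - Real.log x₁ := by field_simp
          rw [he, hLdef, Real.exp_sub, Real.exp_log hK0, Real.exp_log hx₁0]
        rw [hb2]
        exact middle_step hL hs HC (1 - Real.log x₁ / L)
    _ = ∫ x₁ in (1:ℝ)..Real.exp (L * 1), (1 / x₁) *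
          (fun u => L ^ (s + 1) * ∫ v in (1 - u)..1, Jf s H u v) (1 - Real.log x₁ / L) := by
        rw [show Real.exp (L * 1) = K by rw [mul_one, hLdef, Real.exp_log hK0]]
    _ = L * ∫ u in (1 - 1 : ℝ)..1, L ^ (s + 1) * ∫ v in (1 - u)..1, Jf s H u v :=
        key_sub hL hMc 1 1
    _ = L ^ (s + 2) * ∫ u in (0:ℝ)..1, ∫ v in (1 - u)..1, Jf s H u v := by
        rw [show (1:ℝ) - 1 = 0 from by norm_num, intervalIntegral.integral_const_mul,
          ← mul_assoc]
        congr 1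
        have h1 : L ^ (s + 2) = L ^ (s + 1) * L ^ (1:ℝ) := by
          rw [← Real.rpow_add hL, show s + 1 + 1 = s + 2 from by ring]
        rw [h1, Real.rpow_one]
        ring
    _ = L ^ (s + 2) *
        ∫ u in (0:ℝ)..1, ∫ v in (1 - u)..1, ∫ w in (0:ℝ)..(u + v - 1),
          (u + v - w - 1) ^ (s - 1) * h u v w := by
        congr 1
        apply intervalIntegral.integral_congr
        intro u hu
        rw [Set.uIcc_of_le zero_le_one] at hu
        simp only
        apply intervalIntegral.integral_congr
        intro v hv
        rw [Set.uIcc_of_le (by linarith [hu.1] : (1:ℝ) - u ≤ 1)] at hv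
        simp only
        show Jf s H u v = _
        unfold Jf
        apply intervalIntegral.integral_congr
        intro w hw
        rw [Set.uIcc_of_le (by linarith [hv.1] : (0:ℝ) ≤ u + v - 1)] at hw
        simp only
        rw [hH u v w hu ⟨by linarith [hv.1, hu.2], hv.2⟩
          ⟨hw.1, by linarith [hw.2, hu.2, hv.2]⟩]
end
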